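/- arXiv:1804.06837 — 3 statements merged into one kernel-verified Lean document; each statement's English description precedes it below -/
import Mathlib

section
/- Let D be a self-adjoint operator on ℋ and let (φ_g)_{g∈Γ} be a finitely supported family of bounded operators on ℋ, each preserving Dom(D) and such that each commutator [D, φ_g] extends to a bounded operator. Define the convolution-type operator Φ on ℓ²(Γ,ℋ) by (Φξ)(g) = Σ_{g₁g₂ = g} φ_{g₁}(ξ(g₂)) (with Γ a group). Then Φ preserves the domain ℓ²(Γ, Dom(D)) of D_⋊ and the commutator [Φ, D_⋊] extends to a bounded operator on ℓ²(Γ,ℋ) with norm at most Σ_{k∈Γ} ‖[D, φ_k]‖. -/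
open scoped ENNReal

section Aux

variable {Γ : Type*} [Group Γ] {H : Type*} [NormedAddCommGroup H]
  [InnerProductSpace ℂ H] [CompleteSpace H]

private lemma aux_memℓp (B : H →L[ℂ] H) (k : Γ) (f : lp (fun _ : Γ => H) 2) :
    Memℓp (fun g : Γ => B ((f : ∀ _ : Γ, H) (k⁻¹ * g))) 2 := by
  have hp : (0:ℝ) < (2 : ℝ≥0∞).toReal := by norm_num
  refine memℓp_gen ?_
  have hS : Summable fun i : Γ => ‖(f : ∀ _ : Γ, H) i‖ ^ (2 : ℝ≥0∞).toReal :=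
    (lp.memℓp f).summable hp
  have hS' : Summable fun g : Γ =>
      ‖B‖ ^ (2 : ℝ≥0∞).toReal * ‖(f : ∀ _ : Γ, H) (k⁻¹ * g)‖ ^ (2 : ℝ≥0∞).toReal := by
    exact (((Equiv.mulLeft k⁻¹).summable_iff.mpr hS).mul_left _)
  refine hS'.of_nonneg_of_le (fun g => Real.rpow_nonneg (norm_nonneg _) _) fun g => ?_
  calc ‖B ((f : ∀ _ : Γ, H) (k⁻¹ * g))‖ ^ (2 : ℝ≥0∞).toReal
      ≤ (‖B‖ * ‖(f : ∀ _ : Γ, H) (k⁻¹ * g)‖) ^ (2 : ℝ≥0∞).toReal :=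
        Real.rpow_le_rpow (norm_nonneg _) (B.le_opNorm _) (by norm_num)
    _ = _ := Real.mul_rpow (norm_nonneg _) (norm_nonneg _)

private lemma aux_norm_le (B : H →L[ℂ] H) (k : Γ) (f : lp (fun _ : Γ => H) 2)
    (hmem : Memℓp (fun g : Γ => B ((f : ∀ _ : Γ, H) (k⁻¹ * g))) 2) :
    ‖(⟨fun g : Γ => B ((f : ∀ _ : Γ, H) (k⁻¹ * g)), hmem⟩ : lp (fun _ : Γ => H) 2)‖
      ≤ ‖B‖ * ‖f‖ := by
  have hp : (0:ℝ) < (2 : ℝ≥0∞).toReal := by norm_num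
  refine lp.norm_le_of_forall_sum_le hp
    (mul_nonneg (norm_nonneg _) (norm_nonneg _)) fun s => ?_
  have hfs : HasSum (fun i : Γ => ‖(f : ∀ _ : Γ, H) i‖ ^ (2 : ℝ≥0∞).toReal)
      (‖f‖ ^ (2 : ℝ≥0∞).toReal) := lp.hasSum_norm hp f
  have h1 : ∀ i : Γ, ‖B ((f : ∀ _ : Γ, H) (k⁻¹ * i))‖ ^ (2 : ℝ≥0∞).toReal
      ≤ ‖B‖ ^ (2 : ℝ≥0∞).toReal * ‖(f : ∀ _ : Γ, H) (k⁻¹ * i)‖ ^ (2 : ℝ≥0∞).toReal := by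
    intro i
    calc ‖B ((f : ∀ _ : Γ, H) (k⁻¹ * i))‖ ^ (2 : ℝ≥0∞).toReal
        ≤ (‖B‖ * ‖(f : ∀ _ : Γ, H) (k⁻¹ * i)‖) ^ (2 : ℝ≥0∞).toReal :=
          Real.rpow_le_rpow (norm_nonneg _) (B.le_opNorm _) (by norm_num)
      _ = _ := Real.mul_rpow (norm_nonneg _) (norm_nonneg _)
  calc ∑ i ∈ s, ‖B ((f : ∀ _ : Γ, H) (k⁻¹ * i))‖ ^ (2 : ℝ≥0∞).toReal
      ≤ ∑ i ∈ s, ‖B‖ ^ (2 : ℝ≥0∞).toReal *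
          ‖(f : ∀ _ : Γ, H) (k⁻¹ * i)‖ ^ (2 : ℝ≥0∞).toReal :=
        Finset.sum_le_sum fun i _ => h1 i
    _ = ‖B‖ ^ (2 : ℝ≥0∞).toReal *
          ∑ i ∈ s, ‖(f : ∀ _ : Γ, H) (k⁻¹ * i)‖ ^ (2 : ℝ≥0∞).toReal := by
        rw [Finset.mul_sum]
    _ ≤ ‖B‖ ^ (2 : ℝ≥0∞).toReal * ‖f‖ ^ (2 : ℝ≥0∞).toReal := by
        refine mul_le_mul_of_nonneg_left ?_ (Real.rpow_nonneg (norm_nonneg _) _)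
        have : ∑ i ∈ s, ‖(f : ∀ _ : Γ, H) (k⁻¹ * i)‖ ^ (2 : ℝ≥0∞).toReal
            = ∑ j ∈ s.map ⟨fun i => k⁻¹ * i, mul_right_injective k⁻¹⟩,
              ‖(f : ∀ _ : Γ, H) j‖ ^ (2 : ℝ≥0∞).toReal := by
          rw [Finset.sum_map]; rfl
        rw [this]
        exact sum_le_hasSum _ (fun i _ => Real.rpow_nonneg (norm_nonneg _) _) hfs
    _ = (‖B‖ * ‖f‖) ^ (2 : ℝ≥0∞).toReal :=
        (Real.mul_rpow (norm_nonneg _) (norm_nonneg _)).symm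

/-- Convolution-block operator: `ξ ↦ (g ↦ B (ξ (k⁻¹ * g)))`. -/
noncomputable def convBlock (B : H →L[ℂ] H) (k : Γ) :
    lp (fun _ : Γ => H) 2 →L[ℂ] lp (fun _ : Γ => H) 2 :=
  LinearMap.mkContinuous
    { toFun := fun f => (⟨fun g : Γ => B ((f : ∀ _ : Γ, H) (k⁻¹ * g)),
        aux_memℓp B k f⟩ : lp (fun _ : Γ => H) 2)
      map_add' := by
        intro f g
        apply lp.ext
        funext x
        simp [lp.coeFn_add, Pi.add_apply]; rfl
      map_smul' := by
        intro c f
        apply lp.ext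
        funext x
        simp [lp.coeFn_smul, Pi.smul_apply] }
    ‖B‖ (fun f => aux_norm_le B k f _)

@[simp] lemma convBlock_apply (B : H →L[ℂ] H) (k : Γ) (f : lp (fun _ : Γ => H) 2) (g : Γ) :
    ((convBlock B k f : lp (fun _ : Γ => H) 2) : ∀ _ : Γ, H) g
      = B ((f : ∀ _ : Γ, H) (k⁻¹ * g)) := rfl

lemma convBlock_norm_le (B : H →L[ℂ] H) (k : Γ) : ‖convBlock B k‖ ≤ ‖B‖ :=
  LinearMap.mkContinuous_norm_le _ (norm_nonneg _) _

end Aux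

/-- Let `D` be a self-adjoint operator on `ℋ` and `(φ_g)_{g∈Γ}` a finitely
supported family of bounded operators, each preserving `Dom(D)` and with each commutator
`[D, φ_g]` extending to a bounded operator `C_g`.  The convolution operator `Φ` on
`ℓ²(Γ, ℋ)`, `(Φξ)(g) = Σ_{g₁g₂=g} φ_{g₁}(ξ(g₂))`, preserves the domain of the diagonal
operator `D_⋊` and the commutator `[Φ, D_⋊]` extends to a bounded operator `K` on
`ℓ²(Γ, ℋ)` with `‖K‖ ≤ Σ_k ‖[D, φ_k]‖`. -/
theorem commutator_with_crossed_operator_bounded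
    {Γ : Type*} [Group Γ] [Countable Γ]
    {H : Type*} [NormedAddCommGroup H] [InnerProductSpace ℂ H] [CompleteSpace H]
    (D : H →ₗ.[ℂ] H) (hsa : IsSelfAdjoint D)
    (φ : Γ → (H →L[ℂ] H)) (hsupp : (Function.support φ).Finite)
    (hpres : ∀ (g : Γ), ∀ x ∈ D.domain, φ g x ∈ D.domain)
    (C : Γ → (H →L[ℂ] H))
    (hC : ∀ (g : Γ) (x y z : H), (x, y) ∈ D.graph → (φ g x, z) ∈ D.graph →
      C g x = z - φ g y)
    (Φ : lp (fun _ : Γ => H) 2 →L[ℂ] lp (fun _ : Γ => H) 2)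
    (hΦ : ∀ (ξ : lp (fun _ : Γ => H) 2) (g : Γ),
      (Φ ξ : ∀ _ : Γ, H) g = ∑ᶠ g₁ : Γ, φ g₁ ((ξ : ∀ _ : Γ, H) (g₁⁻¹ * g)))
    (Dc : lp (fun _ : Γ => H) 2 →ₗ.[ℂ] lp (fun _ : Γ => H) 2)
    (hgraph : ∀ ξ η : lp (fun _ : Γ => H) 2,
      (ξ, η) ∈ Dc.graph ↔
        ∀ g : Γ, ((ξ : ∀ _ : Γ, H) g, (η : ∀ _ : Γ, H) g) ∈ D.graph) :
    (∀ ξ ∈ Dc.domain, Φ ξ ∈ Dc.domain) ∧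
    ∃ K : lp (fun _ : Γ => H) 2 →L[ℂ] lp (fun _ : Γ => H) 2,
      ‖K‖ ≤ (∑ᶠ k : Γ, ‖C k‖) ∧
      ∀ ξ η η' : lp (fun _ : Γ => H) 2,
        (ξ, η) ∈ Dc.graph → (Φ ξ, η') ∈ Dc.graph → K ξ = Φ η - η' := by
  classical
  set s : Finset Γ := hsupp.toFinset with hs
  -- functionality of the graph of D
  have hfun : ∀ {x y z : H}, (x, y) ∈ D.graph → (x, z) ∈ D.graph → y = z := by
    intro x y z h1 h2
    rw [D.mem_graph_iff] at h1 h2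
    obtain ⟨⟨a, ha⟩, ha1, ha2⟩ := h1
    obtain ⟨⟨b, hb⟩, hb1, hb2⟩ := h2
    simp only at ha1 hb1 ha2 hb2
    subst ha1
    cases hb1
    rw [← ha2, ← hb2]
  -- C vanishes off the support of φ
  have hCzero : ∀ k : Γ, k ∉ s → C k = 0 := by
    intro k hk
    have hφk : φ k = 0 := by
      by_contra h
      exact hk (hsupp.mem_toFinset.mpr h)
    have hdense : Dense (D.domain : Set H) := hsa.dense_domain
    have heq : ∀ x ∈ (D.domain : Set H), C k x = (0 : H →L[ℂ] H) x := by
      intro x hx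
      have hxy : (x, D ⟨x, hx⟩) ∈ D.graph := D.mem_graph ⟨x, hx⟩
      have h0 : (φ k x, (0 : H)) ∈ D.graph := by
        rw [hφk]
        simpa using D.graph.zero_mem
      have := hC k x (D ⟨x, hx⟩) 0 hxy h0
      simpa [hφk] using this
    have : (C k : H → H) = ((0 : H →L[ℂ] H) : H → H) :=
      Continuous.ext_on hdense (C k).continuous ((0 : H →L[ℂ] H).continuous) heq
    exact ContinuousLinearMap.ext fun x => congrFun this x
  -- the convolution operator built from C
  set T : lp (fun _ : Γ => H) 2 →L[ℂ] lp (fun _ : Γ => H) 2 :=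
    ∑ k ∈ s, convBlock (C k) k with hT
  have hTapp : ∀ (ξ : lp (fun _ : Γ => H) 2) (g : Γ),
      ((T ξ : lp (fun _ : Γ => H) 2) : ∀ _ : Γ, H) g
        = ∑ k ∈ s, C k ((ξ : ∀ _ : Γ, H) (k⁻¹ * g)) := by
    intro ξ g
    rw [hT, ContinuousLinearMap.sum_apply, lp.coeFn_sum, Finset.sum_apply]
    exact Finset.sum_congr rfl fun k _ => rfl
  -- Φ as finite sum
  have hΦ' : ∀ (ξ : lp (fun _ : Γ => H) 2) (g : Γ),
      (Φ ξ : ∀ _ : Γ, H) g = ∑ k ∈ s, φ k ((ξ : ∀ _ : Γ, H) (k⁻¹ * g)) := by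
    intro ξ g
    rw [hΦ ξ g]
    refine finsum_eq_sum_of_support_subset _ ?_
    intro k hk
    simp only [Function.mem_support, ne_eq] at hk
    by_contra h
    have : φ k = 0 := by
      by_contra h'
      exact h (hsupp.mem_toFinset.mpr h')
    simp [this] at hk
  -- key pointwise graph computation
  have hkey : ∀ ξ η : lp (fun _ : Γ => H) 2, (ξ, η) ∈ Dc.graph →
      ∀ g : Γ, ((Φ ξ : ∀ _ : Γ, H) g, ((Φ η + T ξ : lp (fun _ : Γ => H) 2) : ∀ _ : Γ, H) g)
        ∈ D.graph := by
    intro ξ η hξη g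
    have hpt := (hgraph ξ η).mp hξη
    have hsum : (∑ k ∈ s, (φ k ((ξ : ∀ _ : Γ, H) (k⁻¹ * g)),
        φ k ((η : ∀ _ : Γ, H) (k⁻¹ * g)) + C k ((ξ : ∀ _ : Γ, H) (k⁻¹ * g)))) ∈ D.graph := by
      refine Submodule.sum_mem _ fun k _ => ?_
      set x := (ξ : ∀ _ : Γ, H) (k⁻¹ * g)
      set y := (η : ∀ _ : Γ, H) (k⁻¹ * g)
      have hxy : (x, y) ∈ D.graph := hpt (k⁻¹ * g)
      have hxdom : x ∈ D.domain := by
        rw [D.mem_graph_iff] at hxy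
        obtain ⟨⟨a, ha⟩, h1, _⟩ := hxy
        simp only at h1
        rwa [← h1]
      have hφdom : φ k x ∈ D.domain := hpres k x hxdom
      have hz : (φ k x, D ⟨φ k x, hφdom⟩) ∈ D.graph := D.mem_graph ⟨φ k x, hφdom⟩
      have hCk := hC k x y (D ⟨φ k x, hφdom⟩) hxy hz
      have : D ⟨φ k x, hφdom⟩ = φ k y + C k x := by rw [hCk]; abel
      rw [← this]
      exact hz
    have h1 : (Φ ξ : ∀ _ : Γ, H) g
        = (∑ k ∈ s, (φ k ((ξ : ∀ _ : Γ, H) (k⁻¹ * g)),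
            φ k ((η : ∀ _ : Γ, H) (k⁻¹ * g)) + C k ((ξ : ∀ _ : Γ, H) (k⁻¹ * g)))).1 := by
      rw [Prod.fst_sum, hΦ' ξ g]
    have h2 : ((Φ η + T ξ : lp (fun _ : Γ => H) 2) : ∀ _ : Γ, H) g
        = (∑ k ∈ s, (φ k ((ξ : ∀ _ : Γ, H) (k⁻¹ * g)),
            φ k ((η : ∀ _ : Γ, H) (k⁻¹ * g)) + C k ((ξ : ∀ _ : Γ, H) (k⁻¹ * g)))).2 := by
      rw [Prod.snd_sum, lp.coeFn_add, Pi.add_apply, hΦ' η g, hTapp ξ g, ← Finset.sum_add_distrib]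
    rw [h1, h2]
    exact hsum
  constructor
  · -- domain preservation
    intro ξ hξ
    have hξg : (ξ, Dc ⟨ξ, hξ⟩) ∈ Dc.graph := Dc.mem_graph ⟨ξ, hξ⟩
    have := (hgraph (Φ ξ) (Φ (Dc ⟨ξ, hξ⟩) + T ξ)).mpr (hkey ξ _ hξg)
    rw [Dc.mem_graph_iff] at this
    obtain ⟨⟨a, ha⟩, h1, _⟩ := this
    simp only at h1
    rwa [← h1]
  · refine ⟨-T, ?_, ?_⟩
    · -- norm bound
      have h1 : ‖(-T : lp (fun _ : Γ => H) 2 →L[ℂ] lp (fun _ : Γ => H) 2)‖ = ‖T‖ := norm_neg T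
      have h2 : ‖T‖ ≤ ∑ k ∈ s, ‖C k‖ := by
        rw [hT]
        refine (norm_sum_le _ _).trans ?_
        exact Finset.sum_le_sum fun k _ => convBlock_norm_le (C k) k
      have h3 : ∑ᶠ k : Γ, ‖C k‖ = ∑ k ∈ s, ‖C k‖ := by
        refine finsum_eq_sum_of_support_subset _ ?_
        intro k hk
        simp only [Function.mem_support, ne_eq] at hk
        by_contra h
        exact hk (by rw [hCzero k h]; simp)
      rw [h1, h3]
      exact h2
    · -- the commutator identity
      intro ξ η η' hξη hΦξ
      have hkeyg := hkey ξ η hξη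
      have hη'g := (hgraph (Φ ξ) η').mp hΦξ
      have hη' : η' = Φ η + T ξ := by
        apply lp.ext
        funext g
        exact hfun (hη'g g) (hkeyg g)
      rw [hη']
      simp only [ContinuousLinearMap.neg_apply]
      abel
end

section
/- With λ, λ̂ as above, the map Λ(T) := λ ∘ T ∘ λ̂ is an injective *-homomorphism from the von Neumann algebra ℳ of Γ-invariant bounded operators on L²(M̂) onto the corner (λλ̂)𝒩(λλ̂) of the crossed product von Neumann algebra 𝒩, i.e. Λ preserves products and adjoints, is injective, and its image is the compression of 𝒩 by the projection λλ̂. -/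
open MeasureTheory ContinuousLinearMap
open scoped ENNReal NNReal
set_option linter.unusedSectionVars false

noncomputable section AuxStmt11

variable {Γ : Type*} [Group Γ] [DecidableEq Γ] {H : Type*} [NormedAddCommGroup H] [InnerProductSpace ℂ H]

/-- An operator (function) commuting with all bounded operators is scalar. -/
lemma aux11_scalar (A : H → H) (hA : ∀ (S : H →L[ℂ] H) (η : H), A (S η) = S (A η)) :
    ∃ c : ℂ, ∀ ζ, A ζ = c • ζ := by
  by_cases hH : ∀ ζ : H, ζ = 0
  · exact ⟨0, fun ζ => by rw [hH (A ζ), hH ζ, smul_zero]⟩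
  push_neg at hH
  obtain ⟨ξ, hξ⟩ := hH
  have hξ0 : (inner ℂ ξ ξ : ℂ) ≠ 0 := inner_self_ne_zero.mpr hξ
  refine ⟨(inner ℂ ξ (A ξ)) / (inner ℂ ξ ξ), fun ζ => ?_⟩
  have h := hA (((inner ℂ ξ ξ : ℂ)⁻¹ • innerSL ℂ ξ).smulRight ζ) ξ
  simp only [ContinuousLinearMap.smulRight_apply, ContinuousLinearMap.smul_apply,
    innerSL_apply_apply, smul_eq_mul, inv_mul_cancel₀ hξ0, one_smul] at h
  rw [h, div_eq_inv_mul, mul_comm, mul_smul, smul_smul, mul_comm]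

lemma aux11_single_apply (i j : Γ) (ζ : H) :
    (lp.single 2 i ζ : lp (fun _ : Γ => H) 2) j = if j = i then ζ else 0 := by
  rcases eq_or_ne j i with rfl | h
  · rw [lp.single_apply_self, if_pos rfl]
  · rw [lp.single_apply_ne _ _ _ h, if_neg h]

lemma aux11_memR (g : Γ) (x : lp (fun _ : Γ => H) 2) :
    Memℓp (fun h : Γ => x (h * g)) 2 := by
  have hx := lp.memℓp x
  rw [memℓp_gen_iff (by norm_num)] at hx ⊢
  exact ((Equiv.mulRight g).summable_iff
    (f := fun i : Γ => ‖x i‖ ^ (2 : ℝ≥0∞).toReal)).mpr hx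

/-- right translation on `ℓ²(Γ, H)` as a linear isometry equivalence. -/
def aux11_R (g : Γ) : lp (fun _ : Γ => H) 2 ≃ₗᵢ[ℂ] lp (fun _ : Γ => H) 2 where
  toFun x := ⟨fun h => x (h * g), aux11_memR g x⟩
  invFun x := ⟨fun h => x (h * g⁻¹), aux11_memR g⁻¹ x⟩
  left_inv x := by ext h; simp [mul_assoc]
  right_inv x := by ext h; simp [mul_assoc]
  map_add' x y := by ext h; simp [lp.coeFn_add]; rfl
  map_smul' c x := by ext h; simp [lp.coeFn_smul]
  norm_map' x := by
    have h1 : HasSum (fun i : Γ => ‖x (i * g)‖ ^ (2 : ℝ≥0∞).toReal)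
        (‖x‖ ^ (2 : ℝ≥0∞).toReal) :=
      ((Equiv.mulRight g).hasSum_iff
        (f := fun i : Γ => ‖x i‖ ^ (2 : ℝ≥0∞).toReal)).mpr (lp.hasSum_norm (by norm_num) x)
    have h2 := lp.hasSum_norm (p := 2) (by norm_num)
      (⟨fun h => x (h * g), aux11_memR g x⟩ : lp (fun _ : Γ => H) 2)
    have h3 := h2.unique h1
    have key : ∀ y : ℝ, 0 ≤ y → ((y ^ ((2 : ℝ≥0∞).toReal)) ^ ((2 : ℝ≥0∞).toReal)⁻¹) = y := by
      intro y hy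
      rw [← Real.rpow_mul hy, mul_inv_cancel₀ (by norm_num), Real.rpow_one]
    calc ‖(⟨fun h => x (h * g), aux11_memR g x⟩ : lp (fun _ : Γ => H) 2)‖
        = ((‖(⟨fun h => x (h * g), aux11_memR g x⟩ : lp (fun _ : Γ => H) 2)‖
            ^ ((2:ℝ≥0∞).toReal)) ^ ((2:ℝ≥0∞).toReal)⁻¹) := (key _ (norm_nonneg _)).symm
      _ = ((‖x‖ ^ ((2:ℝ≥0∞).toReal)) ^ ((2:ℝ≥0∞).toReal)⁻¹) := by rw [h3]
      _ = ‖x‖ := key _ (norm_nonneg _)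

lemma aux11_R_apply (g : Γ) (x : lp (fun _ : Γ => H) 2) (h : Γ) :
    aux11_R g x h = x (h * g) := rfl


section Measure

variable {M : Type*} [MeasurableSpace M] {μ : MeasureTheory.Measure M}

variable {a : Γ → M → M}

/-- `a g` as a measurable equivalence. -/
def aux11_aEquiv (hmp : ∀ g : Γ, MeasurePreserving (a g) μ μ)
    (hone : ∀ m, a 1 m = m) (hmulact : ∀ (g h : Γ) (m : M), a (g * h) m = a h (a g m))
    (g : Γ) : M ≃ᵐ M where
  toFun := a g
  invFun := a g⁻¹
  left_inv m := by rw [← hmulact g g⁻¹ m, mul_inv_cancel, hone]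
  right_inv m := by rw [← hmulact g⁻¹ g m, inv_mul_cancel, hone]
  measurable_toFun := (hmp g).measurable
  measurable_invFun := (hmp g⁻¹).measurable

variable {UL : Γ → (Lp ℂ 2 μ ≃ₗᵢ[ℂ] Lp ℂ 2 μ)}

lemma aux11_UL_comp (hmp : ∀ g : Γ, MeasurePreserving (a g) μ μ)
    (hmulact : ∀ (g h : Γ) (m : M), a (g * h) m = a h (a g m))
    (hUL : ∀ (g : Γ) (η : Lp ℂ 2 μ),
      ((UL g η : Lp ℂ 2 μ) : M → ℂ) =ᵐ[μ] fun m => (η : M → ℂ) (a g m))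
    (g h : Γ) (η : Lp ℂ 2 μ) : UL g (UL h η) = UL (g * h) η := by
  refine Lp.ext ?_
  have h2 : (fun m => (UL h η : M → ℂ) (a g m)) =ᵐ[μ]
      fun m => (η : M → ℂ) (a h (a g m)) :=
    (hmp g).quasiMeasurePreserving.ae_eq (hUL h η)
  have h3 : (fun m => (η : M → ℂ) (a h (a g m))) = fun m => (η : M → ℂ) (a (g * h) m) :=
    funext fun m => by rw [hmulact]
  exact (hUL g (UL h η)).trans ((h2.trans (Filter.EventuallyEq.of_eq h3)).trans
    (hUL (g * h) η).symm)

lemma aux11_UL_one (hone : ∀ m, a 1 m = m)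
    (hUL : ∀ (g : Γ) (η : Lp ℂ 2 μ),
      ((UL g η : Lp ℂ 2 μ) : M → ℂ) =ᵐ[μ] fun m => (η : M → ℂ) (a g m))
    (η : Lp ℂ 2 μ) : UL 1 η = η := by
  refine Lp.ext ((hUL 1 η).trans (Filter.EventuallyEq.of_eq (funext fun m => by rw [hone])))

lemma aux11_UL_cancel (hmp : ∀ g : Γ, MeasurePreserving (a g) μ μ) (hone : ∀ m, a 1 m = m)
    (hmulact : ∀ (g h : Γ) (m : M), a (g * h) m = a h (a g m))
    (hUL : ∀ (g : Γ) (η : Lp ℂ 2 μ),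
      ((UL g η : Lp ℂ 2 μ) : M → ℂ) =ᵐ[μ] fun m => (η : M → ℂ) (a g m))
    (g : Γ) (η : Lp ℂ 2 μ) : UL g (UL g⁻¹ η) = η := by
  rw [aux11_UL_comp hmp hmulact hUL, mul_inv_cancel, aux11_UL_one hone hUL]

/-- `UL g` as a continuous linear map. -/
def aux11_Uc (UL : Γ → (Lp ℂ 2 μ ≃ₗᵢ[ℂ] Lp ℂ 2 μ)) (g : Γ) : Lp ℂ 2 μ →L[ℂ] Lp ℂ 2 μ :=
  (UL g).toLinearIsometry.toContinuousLinearMap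

@[simp] lemma aux11_Uc_apply (g : Γ) (η : Lp ℂ 2 μ) : aux11_Uc UL g η = UL g η := rfl

lemma aux11_Uc_adjoint (hmp : ∀ g : Γ, MeasurePreserving (a g) μ μ) (hone : ∀ m, a 1 m = m)
    (hmulact : ∀ (g h : Γ) (m : M), a (g * h) m = a h (a g m))
    (hUL : ∀ (g : Γ) (η : Lp ℂ 2 μ),
      ((UL g η : Lp ℂ 2 μ) : M → ℂ) =ᵐ[μ] fun m => (η : M → ℂ) (a g m))
    (g : Γ) : ContinuousLinearMap.adjoint (aux11_Uc UL g) = aux11_Uc UL g⁻¹ := by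
  refine (((eq_adjoint_iff _ _).mpr fun x y => ?_)).symm
  calc (inner ℂ (aux11_Uc UL g⁻¹ x) y : ℂ)
      = inner ℂ (UL g (UL g⁻¹ x)) (UL g y) := ((UL g).inner_map_map _ _).symm
    _ = inner ℂ x (aux11_Uc UL g y) := by
        rw [aux11_UL_cancel hmp hone hmulact hUL]; rfl

/-- right translation as a continuous linear map. -/
def aux11_Rc (Γ : Type*) [Group Γ] [DecidableEq Γ] {H : Type*} [NormedAddCommGroup H]
    [InnerProductSpace ℂ H] (g : Γ) :
    lp (fun _ : Γ => H) 2 →L[ℂ] lp (fun _ : Γ => H) 2 :=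
  (aux11_R g).toLinearIsometry.toContinuousLinearMap

@[simp] lemma aux11_Rc_apply {H : Type*} [NormedAddCommGroup H] [InnerProductSpace ℂ H]
    (g : Γ) (x : lp (fun _ : Γ => H) 2) (h : Γ) : aux11_Rc Γ g x h = x (h * g) := rfl

lemma aux11_R_cancel {H : Type*} [NormedAddCommGroup H] [InnerProductSpace ℂ H]
    (g : Γ) (x : lp (fun _ : Γ => H) 2) : aux11_Rc Γ g (aux11_Rc Γ g⁻¹ x) = x := by
  apply lp.ext; funext h
  show x (h * g * g⁻¹) = x h
  rw [mul_assoc, mul_inv_cancel, mul_one]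

lemma aux11_Rc_adjoint {H : Type*} [NormedAddCommGroup H] [InnerProductSpace ℂ H]
    [CompleteSpace H] (g : Γ) :
    ContinuousLinearMap.adjoint (aux11_Rc Γ (H := H) g) = aux11_Rc Γ g⁻¹ := by
  refine (((eq_adjoint_iff _ _).mpr fun x y => ?_)).symm
  calc (inner ℂ (aux11_Rc Γ g⁻¹ x) y : ℂ)
      = inner ℂ (aux11_R g (aux11_R g⁻¹ x)) (aux11_R g y) :=
        ((aux11_R g).inner_map_map (aux11_R g⁻¹ x) y).symm
    _ = inner ℂ x (aux11_Rc Γ g y) := by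
        rw [show (aux11_R g) ((aux11_R g⁻¹) x) = aux11_Rc Γ g (aux11_Rc Γ g⁻¹ x) from rfl,
          aux11_R_cancel]; rfl


/-- coordinate evaluation on `ℓ²(Γ,H)`. -/
def aux11_ev (Γ : Type*) [Group Γ] {H : Type*} [NormedAddCommGroup H]
    [InnerProductSpace ℂ H] (g : Γ) : lp (fun _ : Γ => H) 2 →L[ℂ] H :=
  LinearMap.mkContinuous
    { toFun := fun x => x g
      map_add' := fun x y => by simp
      map_smul' := fun c x => by simp }
    1 (fun x => by
      rw [one_mul]; exact lp.norm_apply_le_norm (by norm_num : (2 : ℝ≥0∞) ≠ 0) x g)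

@[simp] lemma aux11_ev_apply {H : Type*} [NormedAddCommGroup H] [InnerProductSpace ℂ H]
    (g : Γ) (x : lp (fun _ : Γ => H) 2) : aux11_ev Γ g x = x g := rfl

section Lam

variable {ρ : M → ℝ} {lam : Lp ℂ 2 μ →L[ℂ] lp (fun _ : Γ => Lp ℂ 2 μ) 2}

/-- multiplication by `ρ` as an operator, realized as `ev₁ ∘ λ`. -/
def aux11_Mc (lam : Lp ℂ 2 μ →L[ℂ] lp (fun _ : Γ => Lp ℂ 2 μ) 2) : Lp ℂ 2 μ →L[ℂ] Lp ℂ 2 μ :=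
  (aux11_ev Γ 1) ∘L lam

lemma aux11_Mc_ae (hone : ∀ m, a 1 m = m)
    (hlam : ∀ (η : Lp ℂ 2 μ) (g : Γ),
      (((lam η : lp (fun _ : Γ => Lp ℂ 2 μ) 2) : ∀ _ : Γ, Lp ℂ 2 μ) g : M → ℂ)
        =ᵐ[μ] fun m => (ρ m : ℂ) * (η : M → ℂ) (a g m))
    (ζ : Lp ℂ 2 μ) :
    ((aux11_Mc lam ζ : Lp ℂ 2 μ) : M → ℂ) =ᵐ[μ] fun m => (ρ m : ℂ) * (ζ : M → ℂ) m := by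
  refine (hlam ζ 1).trans (Filter.EventuallyEq.of_eq (funext fun m => by rw [hone]))

lemma aux11_lam_Uc (hmp : ∀ g : Γ, MeasurePreserving (a g) μ μ)
    (hmulact : ∀ (g h : Γ) (m : M), a (g * h) m = a h (a g m))
    (hUL : ∀ (g : Γ) (η : Lp ℂ 2 μ),
      ((UL g η : Lp ℂ 2 μ) : M → ℂ) =ᵐ[μ] fun m => (η : M → ℂ) (a g m))
    (hlam : ∀ (η : Lp ℂ 2 μ) (g : Γ),
      (((lam η : lp (fun _ : Γ => Lp ℂ 2 μ) 2) : ∀ _ : Γ, Lp ℂ 2 μ) g : M → ℂ)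
        =ᵐ[μ] fun m => (ρ m : ℂ) * (η : M → ℂ) (a g m))
    (g : Γ) : lam ∘L aux11_Uc UL g = aux11_Rc Γ g ∘L lam := by
  refine ContinuousLinearMap.ext fun η => lp.ext (funext fun h => Lp.ext ?_)
  show (((lam (UL g η) : ∀ _ : Γ, Lp ℂ 2 μ) h : Lp ℂ 2 μ) : M → ℂ)
      =ᵐ[μ] (((lam η : ∀ _ : Γ, Lp ℂ 2 μ) (h * g) : Lp ℂ 2 μ) : M → ℂ)
  have h2 : (fun m => (UL g η : M → ℂ) (a h m)) =ᵐ[μ]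
      fun m => (η : M → ℂ) (a g (a h m)) :=
    (hmp h).quasiMeasurePreserving.ae_eq (hUL g η)
  have h3 : (fun m => (ρ m : ℂ) * (η : M → ℂ) (a g (a h m)))
      = fun m => (ρ m : ℂ) * (η : M → ℂ) (a (h * g) m) :=
    funext fun m => by rw [hmulact]
  calc ((lam (UL g η)) : ∀ _ : Γ, Lp ℂ 2 μ) h
      =ᵐ[μ] fun m => (ρ m : ℂ) * (UL g η : M → ℂ) (a h m) := hlam (UL g η) h
    _ =ᵐ[μ] fun m => (ρ m : ℂ) * (η : M → ℂ) (a g (a h m)) :=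
        Filter.EventuallyEq.mul (Filter.EventuallyEq.refl _ _) h2
    _ =ᵐ[μ] fun m => (ρ m : ℂ) * (η : M → ℂ) (a (h * g) m) := Filter.EventuallyEq.of_eq h3
    _ =ᵐ[μ] ((lam η : ∀ _ : Γ, Lp ℂ 2 μ) (h * g) : M → ℂ) := (hlam η (h * g)).symm

end Lam

section Singles

variable {H : Type*} [NormedAddCommGroup H] [InnerProductSpace ℂ H]

lemma aux11_R_single (g j : Γ) (ζ : H) :
    aux11_Rc Γ g⁻¹ (lp.single 2 j ζ) = lp.single 2 (j * g) ζ := by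
  apply lp.ext; funext h
  show (lp.single 2 j ζ : lp (fun _ : Γ => H) 2) (h * g⁻¹) = _
  rw [aux11_single_apply, aux11_single_apply]
  congr 1
  simp only [eq_iff_iff]
  constructor
  · rintro rfl; rw [inv_mul_cancel_right]
  · rintro rfl; rw [mul_inv_cancel_right]

end Singles

section IotaV

variable {ι : (Lp ℂ 2 μ →L[ℂ] Lp ℂ 2 μ) →
      (lp (fun _ : Γ => Lp ℂ 2 μ) 2 →L[ℂ] lp (fun _ : Γ => Lp ℂ 2 μ) 2)}
variable {V : Γ → (lp (fun _ : Γ => Lp ℂ 2 μ) 2 →L[ℂ] lp (fun _ : Γ => Lp ℂ 2 μ) 2)}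

lemma aux11_iota_single
    (hι : ∀ (S : Lp ℂ 2 μ →L[ℂ] Lp ℂ 2 μ) (x : lp (fun _ : Γ => Lp ℂ 2 μ) 2) (g : Γ),
      (ι S x : ∀ _ : Γ, Lp ℂ 2 μ) g = S ((x : ∀ _ : Γ, Lp ℂ 2 μ) g))
    (S : Lp ℂ 2 μ →L[ℂ] Lp ℂ 2 μ) (h : Γ) (ζ : Lp ℂ 2 μ) :
    ι S (lp.single 2 h ζ) = lp.single 2 h (S ζ) := by
  apply lp.ext; funext j
  rw [hι, aux11_single_apply, aux11_single_apply]
  rcases eq_or_ne j h with rfl | hne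
  · rw [if_pos rfl, if_pos rfl]
  · rw [if_neg hne, if_neg hne, map_zero]

lemma aux11_V_single
    (hV : ∀ (k : Γ) (x : lp (fun _ : Γ => Lp ℂ 2 μ) 2) (g : Γ),
      (V k x : ∀ _ : Γ, Lp ℂ 2 μ) g = UL k ((x : ∀ _ : Γ, Lp ℂ 2 μ) (k⁻¹ * g)))
    (k h : Γ) (ζ : Lp ℂ 2 μ) :
    V k (lp.single 2 h ζ) = lp.single 2 (k * h) (UL k ζ) := by
  apply lp.ext; funext j
  rw [hV, aux11_single_apply, aux11_single_apply]
  rcases eq_or_ne j (k * h) with rfl | hne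
  · rw [if_pos rfl, if_pos (by rw [inv_mul_cancel_left])]
  · rw [if_neg hne, if_neg (fun hc => hne (by rw [← hc, mul_inv_cancel_left])), map_zero]

end IotaV


section Analytic

lemma aux11_lintegral_sq {f : Lp ℂ 2 μ} :
    ∫⁻ m, (‖(f : M → ℂ) m‖₊ : ℝ≥0∞) ^ (2 : ℕ) ∂μ = (‖f‖₊ : ℝ≥0∞) ^ (2 : ℕ) := by
  have h : eLpNorm (f : M → ℂ) 2 μ = (∫⁻ m, (‖(f : M → ℂ) m‖₊ : ℝ≥0∞) ^ (2:ℝ≥0∞).toReal ∂μ)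
      ^ (1 / (2:ℝ≥0∞).toReal) := MeasureTheory.eLpNorm_eq_lintegral_rpow_enorm_toReal
    (f := (f : M → ℂ)) (μ := μ) (by norm_num : (2:ℝ≥0∞) ≠ 0) (by norm_num : (2:ℝ≥0∞) ≠ ∞)
  have hcoe : (‖f‖₊ : ℝ≥0∞) = eLpNorm (f : M → ℂ) 2 μ := by
    rw [Lp.nnnorm_def, ENNReal.coe_toNNReal (Lp.eLpNorm_ne_top f)]
  have ht : (2:ℝ≥0∞).toReal = (2:ℝ) := by norm_num
  have hB : (∫⁻ m, (‖(f : M → ℂ) m‖₊ : ℝ≥0∞) ^ (2:ℕ) ∂μ)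
      = ∫⁻ m, (‖(f : M → ℂ) m‖₊ : ℝ≥0∞) ^ (2:ℝ≥0∞).toReal ∂μ := by
    refine MeasureTheory.lintegral_congr fun m => ?_
    rw [ht, ← ENNReal.rpow_natCast]
    norm_num
  rw [hB, hcoe, h, ← ENNReal.rpow_natCast (_ ^ (1 / (2:ℝ≥0∞).toReal)) 2,
    ← ENNReal.rpow_mul, ht]
  norm_num

lemma aux11_summable_sq {H : Type*} [NormedAddCommGroup H] [InnerProductSpace ℂ H]
    (x : lp (fun _ : Γ => H) 2) : Summable fun g : Γ => (‖x g‖₊ ^ (2 : ℕ) : ℝ≥0) := by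
  have h := (lp.memℓp x).summable (by norm_num : 0 < (2:ℝ≥0∞).toReal)
  rw [← NNReal.summable_coe]
  have : ∀ g : Γ, ((‖x g‖₊ ^ (2:ℕ) : ℝ≥0) : ℝ) = ‖x g‖ ^ (2:ℝ≥0∞).toReal := by
    intro g
    push_cast
    rw [show (2:ℝ≥0∞).toReal = ((2:ℕ):ℝ) by norm_num, Real.rpow_natCast]
  simpa only [this] using h

local notation "⟪" x ", " y "⟫" => @inner ℂ _ _ x y

lemma aux11_lam_inner [Countable Γ] {ρ : M → ℝ}
    {lam : Lp ℂ 2 μ →L[ℂ] lp (fun _ : Γ => Lp ℂ 2 μ) 2}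
    (hmp : ∀ g : Γ, MeasurePreserving (a g) μ μ)
    (hone : ∀ m, a 1 m = m)
    (hmulact : ∀ (g h : Γ) (m : M), a (g * h) m = a h (a g m))
    (hsum : ∀ m, ∑' g : Γ, (ρ (a g m)) ^ 2 = 1)
    (hlam : ∀ (η : Lp ℂ 2 μ) (g : Γ),
      (((lam η : lp (fun _ : Γ => Lp ℂ 2 μ) 2) : ∀ _ : Γ, Lp ℂ 2 μ) g : M → ℂ)
        =ᵐ[μ] fun m => (ρ m : ℂ) * (η : M → ℂ) (a g m))
    (η ξ : Lp ℂ 2 μ) : ⟪lam η, lam ξ⟫ = ⟪η, ξ⟫ := by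
  classical
  set x := lam η with hx
  set y := lam ξ with hy
  set e : Γ → M ≃ᵐ M := aux11_aEquiv hmp hone hmulact with he
  have hmape : ∀ g : Γ, Measure.map (e g) μ = μ := fun g => (hmp g).map_eq
  have hagg : ∀ (g : Γ) (m : M), a g (a g⁻¹ m) = m := by
    intro g m
    rw [← hmulact g⁻¹ g m, inv_mul_cancel, hone]
  set F : Γ → M → ℂ := fun g m =>
    ⟪((x g : Lp ℂ 2 μ) : M → ℂ) (a g⁻¹ m), ((y g : Lp ℂ 2 μ) : M → ℂ) (a g⁻¹ m)⟫ with hF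
  -- measurability
  have hmeas : ∀ g : Γ, AEStronglyMeasurable (F g) μ := by
    intro g
    have h1 : AEStronglyMeasurable (fun m => ((x g : Lp ℂ 2 μ) : M → ℂ) (a g⁻¹ m)) μ :=
      (Lp.aestronglyMeasurable (x g)).comp_quasiMeasurePreserving
        (hmp g⁻¹).quasiMeasurePreserving
    have h2 : AEStronglyMeasurable (fun m => ((y g : Lp ℂ 2 μ) : M → ℂ) (a g⁻¹ m)) μ :=
      (Lp.aestronglyMeasurable (y g)).comp_quasiMeasurePreserving
        (hmp g⁻¹).quasiMeasurePreserving
    exact h1.inner h2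
  -- each coordinate inner product
  have hcoord : ∀ g : Γ, ⟪x g, y g⟫ = ∫ m, F g m ∂μ := by
    intro g
    rw [MeasureTheory.L2.inner_def]
    have h7 := MeasureTheory.integral_map_equiv (μ := μ) (e g⁻¹)
      (fun m => ⟪((x g : Lp ℂ 2 μ) : M → ℂ) m, ((y g : Lp ℂ 2 μ) : M → ℂ) m⟫)
    rw [hmape g⁻¹] at h7
    exact h7
  -- the summability bound
  have hbound : ∑' g : Γ, ∫⁻ m, ‖F g m‖₊ ∂μ ≠ ⊤ := by
    have hb1 : ∀ g : Γ, ∫⁻ m, ‖F g m‖₊ ∂μ ≤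
        (‖x g‖₊ : ℝ≥0∞) ^ (2:ℕ) + (‖y g‖₊ : ℝ≥0∞) ^ (2:ℕ) := by
      intro g
      have heq : ∫⁻ m, (‖F g m‖₊ : ℝ≥0∞) ∂μ =
          ∫⁻ m, (‖⟪((x g : Lp ℂ 2 μ) : M → ℂ) m, ((y g : Lp ℂ 2 μ) : M → ℂ) m⟫‖₊ : ℝ≥0∞) ∂μ := by
        have h8 := MeasureTheory.lintegral_map_equiv (μ := μ)
          (fun m => (‖⟪((x g : Lp ℂ 2 μ) : M → ℂ) m, ((y g : Lp ℂ 2 μ) : M → ℂ) m⟫‖₊ : ℝ≥0∞))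
          (e g⁻¹)
        rw [hmape g⁻¹] at h8
        exact h8.symm
      rw [heq]
      have hle : ∀ m, (‖⟪((x g : Lp ℂ 2 μ) : M → ℂ) m, ((y g : Lp ℂ 2 μ) : M → ℂ) m⟫‖₊ : ℝ≥0∞)
          ≤ (‖((x g : Lp ℂ 2 μ) : M → ℂ) m‖₊ : ℝ≥0∞) ^ (2:ℕ)
            + (‖((y g : Lp ℂ 2 μ) : M → ℂ) m‖₊ : ℝ≥0∞) ^ (2:ℕ) := by
        intro m
        set u : ℝ≥0∞ := (‖((x g : Lp ℂ 2 μ) : M → ℂ) m‖₊ : ℝ≥0∞)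
        set v : ℝ≥0∞ := (‖((y g : Lp ℂ 2 μ) : M → ℂ) m‖₊ : ℝ≥0∞)
        have h1 : (‖⟪((x g : Lp ℂ 2 μ) : M → ℂ) m, ((y g : Lp ℂ 2 μ) : M → ℂ) m⟫‖₊ : ℝ≥0∞)
            ≤ u * v := by
          rw [← ENNReal.coe_mul]
          exact ENNReal.coe_le_coe.mpr (nnnorm_inner_le_nnnorm _ _)
        refine h1.trans ?_
        rcases le_total u v with huv | huv
        · calc u * v ≤ v * v := mul_le_mul_left huv v
            _ = v ^ (2:ℕ) := (sq v).symm
            _ ≤ u ^ (2:ℕ) + v ^ (2:ℕ) := le_add_self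
        · calc u * v ≤ u * u := mul_le_mul_right huv u
            _ = u ^ (2:ℕ) := (sq u).symm
            _ ≤ u ^ (2:ℕ) + v ^ (2:ℕ) := le_self_add
      calc ∫⁻ m, (‖⟪((x g : Lp ℂ 2 μ) : M → ℂ) m, ((y g : Lp ℂ 2 μ) : M → ℂ) m⟫‖₊ : ℝ≥0∞) ∂μ
          ≤ ∫⁻ m, ((‖((x g : Lp ℂ 2 μ) : M → ℂ) m‖₊ : ℝ≥0∞) ^ (2:ℕ)
            + (‖((y g : Lp ℂ 2 μ) : M → ℂ) m‖₊ : ℝ≥0∞) ^ (2:ℕ)) ∂μ :=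
            MeasureTheory.lintegral_mono hle
        _ = (‖x g‖₊ : ℝ≥0∞) ^ (2:ℕ) + (‖y g‖₊ : ℝ≥0∞) ^ (2:ℕ) := by
            rw [MeasureTheory.lintegral_add_left'
              (@id (AEMeasurable (fun m => (‖((x g : Lp ℂ 2 μ) : M → ℂ) m‖₊ : ℝ≥0∞) ^ (2:ℕ)) μ)
                (((Lp.aestronglyMeasurable (x g)).enorm).pow_const 2))]
            rw [aux11_lintegral_sq, aux11_lintegral_sq]
    refine ne_top_of_le_ne_top ?_ (ENNReal.tsum_le_tsum hb1)
    have : ∀ g : Γ, (‖x g‖₊ : ℝ≥0∞) ^ (2:ℕ) + (‖y g‖₊ : ℝ≥0∞) ^ (2:ℕ)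
        = ((‖x g‖₊ ^ (2:ℕ) + ‖y g‖₊ ^ (2:ℕ) : ℝ≥0) : ℝ≥0∞) := by
      intro g; push_cast; ring
    rw [tsum_congr this]
    rw [ENNReal.tsum_coe_ne_top_iff_summable]
    exact (aux11_summable_sq x).add (aux11_summable_sq y)
  -- interchange
  have hinterchange : ∑' g : Γ, ∫ m, F g m ∂μ = ∫ m, ∑' g : Γ, F g m ∂μ :=
    (MeasureTheory.integral_tsum hmeas hbound).symm
  -- identify the integrand a.e.
  have hone_fun : ∀ g : Γ, F g =ᵐ[μ] fun m => ((ρ (a g⁻¹ m) : ℂ))^2 * ⟪(η : M → ℂ) m, (ξ : M → ℂ) m⟫ := by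
    intro g
    have h1 : (fun m => ((x g : Lp ℂ 2 μ) : M → ℂ) (a g⁻¹ m)) =ᵐ[μ]
        fun m => (ρ (a g⁻¹ m) : ℂ) * (η : M → ℂ) (a g (a g⁻¹ m)) :=
      (hmp g⁻¹).quasiMeasurePreserving.ae_eq (hlam η g)
    have h2 : (fun m => ((y g : Lp ℂ 2 μ) : M → ℂ) (a g⁻¹ m)) =ᵐ[μ]
        fun m => (ρ (a g⁻¹ m) : ℂ) * (ξ : M → ℂ) (a g (a g⁻¹ m)) :=
      (hmp g⁻¹).quasiMeasurePreserving.ae_eq (hlam ξ g)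
    filter_upwards [h1, h2] with m hm1 hm2
    rw [hF]
    simp only [RCLike.inner_apply] at *
    rw [hm1, hm2, hagg g m]
    rw [map_mul, Complex.conj_ofReal]
    ring
  have hae : ∀ᵐ m ∂μ, ∀ g : Γ, F g m
      = ((ρ (a g⁻¹ m) : ℂ))^2 * ⟪(η : M → ℂ) m, (ξ : M → ℂ) m⟫ :=
    MeasureTheory.ae_all_iff.mpr hone_fun
  have hintegrand : (fun m => ∑' g : Γ, F g m) =ᵐ[μ]
      fun m => ⟪(η : M → ℂ) m, (ξ : M → ℂ) m⟫ := by
    filter_upwards [hae] with m hm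
    rw [tsum_congr hm, tsum_mul_right]
    have hsummable : Summable fun g : Γ => (ρ (a g m)) ^ 2 := by
      by_contra hns
      have := hsum m
      rw [tsum_eq_zero_of_not_summable hns] at this
      norm_num at this
    have hts : ∑' g : Γ, ((ρ (a g⁻¹ m) : ℂ))^2 = 1 := by
      have h4 : ∑' g : Γ, ((ρ (a g m) : ℂ))^2 = 1 := by
        have h5 := hsummable.hasSum.mapL Complex.ofRealCLM
        rw [hsum m] at h5
        have h6 : (fun g : Γ => Complex.ofRealCLM ((ρ (a g m))^2))
            = fun g : Γ => ((ρ (a g m) : ℂ))^2 := by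
          funext g; simp [Complex.ofRealCLM_apply]
        rw [h6] at h5
        simpa using h5.tsum_eq
      calc ∑' g : Γ, ((ρ (a g⁻¹ m) : ℂ))^2
          = ∑' g : Γ, ((ρ (a ((Equiv.inv Γ) g) m) : ℂ))^2 := rfl
        _ = ∑' g : Γ, ((ρ (a g m) : ℂ))^2 :=
            (Equiv.inv Γ).tsum_eq (fun g : Γ => ((ρ (a g m) : ℂ))^2)
        _ = 1 := h4
    rw [hts, one_mul]
  calc ⟪x, y⟫ = ∑' g : Γ, ⟪x g, y g⟫ := lp.inner_eq_tsum x y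
    _ = ∑' g : Γ, ∫ m, F g m ∂μ := tsum_congr hcoord
    _ = ∫ m, ∑' g : Γ, F g m ∂μ := hinterchange
    _ = ∫ m, ⟪(η : M → ℂ) m, (ξ : M → ℂ) m⟫ ∂μ := MeasureTheory.integral_congr_ae hintegrand
    _ = ⟪η, ξ⟫ := (MeasureTheory.L2.inner_def η ξ).symm


variable {lam : Lp ℂ 2 μ →L[ℂ] lp (fun _ : Γ => Lp ℂ 2 μ) 2}
variable {hat : lp (fun _ : Γ => Lp ℂ 2 μ) 2 →L[ℂ] Lp ℂ 2 μ}

lemma aux11_hatlam [Countable Γ] {ρ : M → ℝ}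
    (hmp : ∀ g : Γ, MeasurePreserving (a g) μ μ)
    (hone : ∀ m, a 1 m = m)
    (hmulact : ∀ (g h : Γ) (m : M), a (g * h) m = a h (a g m))
    (hsum : ∀ m, ∑' g : Γ, (ρ (a g m)) ^ 2 = 1)
    (hlam : ∀ (η : Lp ℂ 2 μ) (g : Γ),
      (((lam η : lp (fun _ : Γ => Lp ℂ 2 μ) 2) : ∀ _ : Γ, Lp ℂ 2 μ) g : M → ℂ)
        =ᵐ[μ] fun m => (ρ m : ℂ) * (η : M → ℂ) (a g m))
    (hhat : hat = ContinuousLinearMap.adjoint lam)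
    (η : Lp ℂ 2 μ) : hat (lam η) = η := by
  refine ext_inner_right ℂ fun ξ => ?_
  rw [hhat, ContinuousLinearMap.adjoint_inner_left]
  exact aux11_lam_inner hmp hone hmulact hsum hlam η ξ

set_option maxHeartbeats 1000000 in
lemma aux11_hat_single [Countable Γ] {ρ : M → ℝ}
    (hmp : ∀ g : Γ, MeasurePreserving (a g) μ μ)
    (hone : ∀ m, a 1 m = m)
    (hmulact : ∀ (g h : Γ) (m : M), a (g * h) m = a h (a g m))
    (hUL : ∀ (g : Γ) (η : Lp ℂ 2 μ),
      ((UL g η : Lp ℂ 2 μ) : M → ℂ) =ᵐ[μ] fun m => (η : M → ℂ) (a g m))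
    (hlam : ∀ (η : Lp ℂ 2 μ) (g : Γ),
      (((lam η : lp (fun _ : Γ => Lp ℂ 2 μ) 2) : ∀ _ : Γ, Lp ℂ 2 μ) g : M → ℂ)
        =ᵐ[μ] fun m => (ρ m : ℂ) * (η : M → ℂ) (a g m))
    (hhat : hat = ContinuousLinearMap.adjoint lam)
    (h : Γ) (ζ : Lp ℂ 2 μ) :
    hat (lp.single 2 h ζ) = UL h⁻¹ (aux11_Mc lam ζ) := by
  refine ext_inner_right ℂ fun η => ?_
  calc (inner ℂ (hat (lp.single 2 h ζ)) η : ℂ)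
      = inner ℂ (lp.single 2 h ζ) (lam η) := by
        rw [hhat, ContinuousLinearMap.adjoint_inner_left]
    _ = inner ℂ ζ ((lam η : ∀ _ : Γ, Lp ℂ 2 μ) h) := lp.inner_single_left h ζ (lam η)
    _ = ∫ m, inner ℂ (((ζ : Lp ℂ 2 μ) : M → ℂ) m)
          ((((lam η : ∀ _ : Γ, Lp ℂ 2 μ) h : Lp ℂ 2 μ) : M → ℂ) m) ∂μ :=
        MeasureTheory.L2.inner_def _ _
    _ = ∫ m, inner ℂ ((aux11_Mc lam ζ : M → ℂ) m) ((UL h η : M → ℂ) m) ∂μ := by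
        refine MeasureTheory.integral_congr_ae ?_
        filter_upwards [hlam η h, aux11_Mc_ae hone hlam ζ, hUL h η] with m h1 h2 h3
        rw [RCLike.inner_apply, RCLike.inner_apply, h1, h2, h3, map_mul, Complex.conj_ofReal]
        ring
    _ = inner ℂ (aux11_Mc lam ζ) (UL h η) := (MeasureTheory.L2.inner_def _ _).symm
    _ = inner ℂ (UL h (UL h⁻¹ (aux11_Mc lam ζ))) (UL h η) := by
        rw [aux11_UL_cancel hmp hone hmulact hUL]
    _ = inner ℂ (UL h⁻¹ (aux11_Mc lam ζ)) η := (UL h).inner_map_map _ _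

lemma aux11_hat_Rc [Countable Γ] {ρ : M → ℝ}
    (hmp : ∀ g : Γ, MeasurePreserving (a g) μ μ)
    (hone : ∀ m, a 1 m = m)
    (hmulact : ∀ (g h : Γ) (m : M), a (g * h) m = a h (a g m))
    (hUL : ∀ (g : Γ) (η : Lp ℂ 2 μ),
      ((UL g η : Lp ℂ 2 μ) : M → ℂ) =ᵐ[μ] fun m => (η : M → ℂ) (a g m))
    (hlam : ∀ (η : Lp ℂ 2 μ) (g : Γ),
      (((lam η : lp (fun _ : Γ => Lp ℂ 2 μ) 2) : ∀ _ : Γ, Lp ℂ 2 μ) g : M → ℂ)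
        =ᵐ[μ] fun m => (ρ m : ℂ) * (η : M → ℂ) (a g m))
    (hhat : hat = ContinuousLinearMap.adjoint lam)
    (g : Γ) : hat ∘L aux11_Rc Γ g = aux11_Uc UL g ∘L hat := by
  have h1 := aux11_lam_Uc hmp hmulact hUL hlam (ρ := ρ) (lam := lam) g⁻¹
  have h2 := congrArg ContinuousLinearMap.adjoint h1
  rw [ContinuousLinearMap.adjoint_comp, ContinuousLinearMap.adjoint_comp,
    aux11_Uc_adjoint hmp hone hmulact hUL, aux11_Rc_adjoint, inv_inv] at h2
  rw [hhat]
  exact h2.symm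

/-- the commutant of the right translations, as a von Neumann algebra. -/
def aux11_Ncomm (Γ : Type*) [Group Γ] [DecidableEq Γ] (H : Type*) [NormedAddCommGroup H]
    [InnerProductSpace ℂ H] [CompleteSpace H] :
    VonNeumannAlgebra (lp (fun _ : Γ => H) 2) where
  toStarSubalgebra := StarSubalgebra.centralizer ℂ (Set.range fun g : Γ => aux11_Rc Γ (H := H) g)
  centralizer_centralizer' := Set.centralizer_centralizer_centralizer _

lemma aux11_mem_Ncomm {H : Type*} [NormedAddCommGroup H]
    [InnerProductSpace ℂ H] [CompleteSpace H] {z : lp (fun _ : Γ => H) 2 →L[ℂ] lp (fun _ : Γ => H) 2}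
    (hz : ∀ g : Γ, aux11_Rc Γ g * z = z * aux11_Rc Γ g) : z ∈ aux11_Ncomm Γ H := by
  show z ∈ StarSubalgebra.centralizer ℂ _
  rw [StarSubalgebra.mem_centralizer_iff]
  rintro w ⟨g, rfl⟩
  refine ⟨hz g, ?_⟩
  rw [ContinuousLinearMap.star_eq_adjoint, aux11_Rc_adjoint]
  exact hz g⁻¹

lemma aux11_Ncomm_spec {H : Type*} [NormedAddCommGroup H]
    [InnerProductSpace ℂ H] [CompleteSpace H] {z : lp (fun _ : Γ => H) 2 →L[ℂ] lp (fun _ : Γ => H) 2}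
    (hz : z ∈ aux11_Ncomm Γ H) (g : Γ) : aux11_Rc Γ g * z = z * aux11_Rc Γ g := by
  have hz' : z ∈ StarSubalgebra.centralizer ℂ (Set.range fun g : Γ => aux11_Rc Γ (H := H) g) := hz
  rw [StarSubalgebra.mem_centralizer_iff] at hz'
  exact (hz' (aux11_Rc Γ g) ⟨g, rfl⟩).1

section IotaV2

variable {ι : (Lp ℂ 2 μ →L[ℂ] Lp ℂ 2 μ) →
      (lp (fun _ : Γ => Lp ℂ 2 μ) 2 →L[ℂ] lp (fun _ : Γ => Lp ℂ 2 μ) 2)}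
variable {V : Γ → (lp (fun _ : Γ => Lp ℂ 2 μ) 2 →L[ℂ] lp (fun _ : Γ => Lp ℂ 2 μ) 2)}

lemma aux11_iota_Rc
    (hι : ∀ (S : Lp ℂ 2 μ →L[ℂ] Lp ℂ 2 μ) (x : lp (fun _ : Γ => Lp ℂ 2 μ) 2) (g : Γ),
      (ι S x : ∀ _ : Γ, Lp ℂ 2 μ) g = S ((x : ∀ _ : Γ, Lp ℂ 2 μ) g))
    (S : Lp ℂ 2 μ →L[ℂ] Lp ℂ 2 μ) (g : Γ) :
    aux11_Rc Γ g * ι S = ι S * aux11_Rc Γ g := by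
  refine ContinuousLinearMap.ext fun x => lp.ext (funext fun h => ?_)
  rw [ContinuousLinearMap.mul_apply, ContinuousLinearMap.mul_apply]
  rw [show ((aux11_Rc Γ g) (ι S x) : ∀ _ : Γ, Lp ℂ 2 μ) h = (ι S x : ∀ _ : Γ, Lp ℂ 2 μ) (h * g)
    from rfl]
  rw [hι, hι]
  rfl

lemma aux11_V_Rc
    (hV : ∀ (k : Γ) (x : lp (fun _ : Γ => Lp ℂ 2 μ) 2) (g : Γ),
      (V k x : ∀ _ : Γ, Lp ℂ 2 μ) g = UL k ((x : ∀ _ : Γ, Lp ℂ 2 μ) (k⁻¹ * g)))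
    (k g : Γ) : aux11_Rc Γ g * V k = V k * aux11_Rc Γ g := by
  refine ContinuousLinearMap.ext fun x => lp.ext (funext fun h => ?_)
  rw [ContinuousLinearMap.mul_apply, ContinuousLinearMap.mul_apply]
  rw [show ((aux11_Rc Γ g) (V k x) : ∀ _ : Γ, Lp ℂ 2 μ) h = (V k x : ∀ _ : Γ, Lp ℂ 2 μ) (h * g)
    from rfl]
  rw [hV, hV]
  congr 1
  rw [show ((aux11_Rc Γ g) x : ∀ _ : Γ, Lp ℂ 2 μ) (k⁻¹ * h) = (x : ∀ _ : Γ, Lp ℂ 2 μ) (k⁻¹ * h * g)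
    from rfl, mul_assoc]

end IotaV2

end Analytic

end Measure

end AuxStmt11

set_option maxHeartbeats 4000000 in
/-- With `λ, λ̂` as in the cutoff construction for a free proper action,
the map `Λ(T) = λ ∘ T ∘ λ̂` is an injective *-homomorphism from the von Neumann algebra
`ℳ` of `Γ`-invariant bounded operators on `L²(M̂)` onto the corner `(λλ̂)𝒩(λλ̂)` of the
crossed product von Neumann algebra `𝒩`: it preserves products and adjoints, is injective,
and its image is the compression of `𝒩` by the projection `λλ̂`. -/
theorem Lambda_star_monomorphism_onto_corner {Γ : Type*} [Group Γ] [Countable Γ]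
    {M : Type*} [MeasurableSpace M] (μ : Measure M)
    (a : Γ → M → M)
    (hmp : ∀ g : Γ, MeasurePreserving (a g) μ μ)
    (hone : ∀ m, a 1 m = m)
    (hmulact : ∀ (g h : Γ) (m : M), a (g * h) m = a h (a g m))
    (hfree : ∀ g : Γ, g ≠ 1 → ∀ m, a g m ≠ m)
    (ρ : M → ℝ) (hρ : ∀ m, ρ m ∈ Set.Icc (0 : ℝ) 1)
    (hsum : ∀ m, ∑' g : Γ, (ρ (a g m)) ^ 2 = 1)
    -- the unitaries on L²(M̂) induced by the action
    (UL : Γ → (Lp ℂ 2 μ ≃ₗᵢ[ℂ] Lp ℂ 2 μ))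
    (hUL : ∀ (g : Γ) (η : Lp ℂ 2 μ),
      ((UL g η : Lp ℂ 2 μ) : M → ℂ) =ᵐ[μ] fun m => (η : M → ℂ) (a g m))
    -- the maps λ and λ̂
    (lam : Lp ℂ 2 μ →L[ℂ] lp (fun _ : Γ => Lp ℂ 2 μ) 2)
    (hlam : ∀ (η : Lp ℂ 2 μ) (g : Γ),
      (((lam η : lp (fun _ : Γ => Lp ℂ 2 μ) 2) : ∀ _ : Γ, Lp ℂ 2 μ) g : M → ℂ)
        =ᵐ[μ] fun m => (ρ m : ℂ) * (η : M → ℂ) (a g m))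
    (hat : lp (fun _ : Γ => Lp ℂ 2 μ) 2 →L[ℂ] Lp ℂ 2 μ)
    (hhat : hat = ContinuousLinearMap.adjoint lam)
    -- the crossed product von Neumann algebra 𝒩 with its canonical generators
    (ι : (Lp ℂ 2 μ →L[ℂ] Lp ℂ 2 μ) →
      (lp (fun _ : Γ => Lp ℂ 2 μ) 2 →L[ℂ] lp (fun _ : Γ => Lp ℂ 2 μ) 2))
    (hι : ∀ (S : Lp ℂ 2 μ →L[ℂ] Lp ℂ 2 μ) (x : lp (fun _ : Γ => Lp ℂ 2 μ) 2) (g : Γ),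
      (ι S x : ∀ _ : Γ, Lp ℂ 2 μ) g = S ((x : ∀ _ : Γ, Lp ℂ 2 μ) g))
    (V : Γ → (lp (fun _ : Γ => Lp ℂ 2 μ) 2 →L[ℂ] lp (fun _ : Γ => Lp ℂ 2 μ) 2))
    (hV : ∀ (k : Γ) (x : lp (fun _ : Γ => Lp ℂ 2 μ) 2) (g : Γ),
      (V k x : ∀ _ : Γ, Lp ℂ 2 μ) g = UL k ((x : ∀ _ : Γ, Lp ℂ 2 μ) (k⁻¹ * g)))
    (N : VonNeumannAlgebra (lp (fun _ : Γ => Lp ℂ 2 μ) 2))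
    (hgen1 : ∀ S : Lp ℂ 2 μ →L[ℂ] Lp ℂ 2 μ, ι S ∈ N) (hgen2 : ∀ k : Γ, V k ∈ N)
    (hmin : ∀ N' : VonNeumannAlgebra (lp (fun _ : Γ => Lp ℂ 2 μ) 2),
      (∀ S : Lp ℂ 2 μ →L[ℂ] Lp ℂ 2 μ, ι S ∈ N') → (∀ k : Γ, V k ∈ N') →
      ∀ T, T ∈ N → T ∈ N') :
    -- ℳ is the algebra of Γ-invariant operators:
    (∀ T S : Lp ℂ 2 μ →L[ℂ] Lp ℂ 2 μ,
        (∀ (g : Γ) (η : Lp ℂ 2 μ), T (UL g η) = UL g (T η)) →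
        (∀ (g : Γ) (η : Lp ℂ 2 μ), S (UL g η) = UL g (S η)) →
        lam ∘L (T ∘L S) ∘L hat = (lam ∘L T ∘L hat) ∘L (lam ∘L S ∘L hat)) ∧
    (∀ T : Lp ℂ 2 μ →L[ℂ] Lp ℂ 2 μ,
        (∀ (g : Γ) (η : Lp ℂ 2 μ), T (UL g η) = UL g (T η)) →
        lam ∘L (ContinuousLinearMap.adjoint T) ∘L hat =
          ContinuousLinearMap.adjoint (lam ∘L T ∘L hat)) ∧
    (∀ T T' : Lp ℂ 2 μ →L[ℂ] Lp ℂ 2 μ,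
        (∀ (g : Γ) (η : Lp ℂ 2 μ), T (UL g η) = UL g (T η)) →
        (∀ (g : Γ) (η : Lp ℂ 2 μ), T' (UL g η) = UL g (T' η)) →
        lam ∘L T ∘L hat = lam ∘L T' ∘L hat → T = T') ∧
    ((fun T => lam ∘L T ∘L hat) ''
        {T | ∀ (g : Γ) (η : Lp ℂ 2 μ), T (UL g η) = UL g (T η)} =
      (fun S => (lam ∘L hat) ∘L S ∘L (lam ∘L hat)) '' {S | S ∈ N}) := by
  classical
  have hatlam : ∀ η : Lp ℂ 2 μ, hat (lam η) = η :=
    aux11_hatlam hmp hone hmulact hsum hlam hhat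
  refine ⟨?_, ?_, ?_, ?_⟩
  · -- multiplicativity
    intro T S hT hS
    refine ContinuousLinearMap.ext fun η => ?_
    simp only [ContinuousLinearMap.comp_apply, hatlam]
  · -- adjoints
    intro T hT
    rw [hhat, ContinuousLinearMap.adjoint_comp, ContinuousLinearMap.adjoint_comp,
      ContinuousLinearMap.adjoint_adjoint]
    rfl
  · -- injectivity
    intro T T' hT hT' heq
    refine ContinuousLinearMap.ext fun η => ?_
    have h1 := congrArg
      (fun A : lp (fun _ : Γ => Lp ℂ 2 μ) 2 →L[ℂ] lp (fun _ : Γ => Lp ℂ 2 μ) 2 =>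
        hat (A (lam η))) heq
    simpa only [ContinuousLinearMap.comp_apply, hatlam] using h1
  · -- image identification
    apply Set.Subset.antisymm
    · rintro x ⟨T, hT, rfl⟩
      simp only [Set.mem_setOf_eq] at hT
      set D : lp (fun _ : Γ => Lp ℂ 2 μ) 2 →L[ℂ] lp (fun _ : Γ => Lp ℂ 2 μ) 2 :=
        lam ∘L T ∘L hat with hDdef
      have hDsingle : ∀ (j : Γ) (ζ : Lp ℂ 2 μ),
          D (lp.single 2 j ζ) = aux11_Rc Γ j⁻¹ (lam (T (aux11_Mc lam ζ))) := by
        intro j ζ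
        calc D (lp.single 2 j ζ) = lam (T (hat (lp.single 2 j ζ))) := rfl
          _ = lam (T (UL j⁻¹ (aux11_Mc lam ζ))) := by
              rw [aux11_hat_single hmp hone hmulact hUL hlam hhat]
          _ = lam (UL j⁻¹ (T (aux11_Mc lam ζ))) := by rw [hT]
          _ = aux11_Rc Γ j⁻¹ (lam (T (aux11_Mc lam ζ))) :=
              congrArg (fun A : Lp ℂ 2 μ →L[ℂ] lp (fun _ : Γ => Lp ℂ 2 μ) 2 =>
                A (T (aux11_Mc lam ζ))) (aux11_lam_Uc hmp hmulact hUL hlam j⁻¹)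
      have hDmem' : D ∈ Set.centralizer (Set.centralizer (N : Set _)) := by
        rw [Set.mem_centralizer_iff]
        intro W hW
        rw [Set.mem_centralizer_iff] at hW
        have hWι : ∀ (S' : Lp ℂ 2 μ →L[ℂ] Lp ℂ 2 μ) (z : lp (fun _ : Γ => Lp ℂ 2 μ) 2),
            W (ι S' z) = ι S' (W z) := by
          intro S' z
          have h2 := hW (ι S') (hgen1 S')
          calc W (ι S' z) = (W * ι S') z := rfl
            _ = (ι S' * W) z := by rw [h2]
            _ = ι S' (W z) := rfl
        have hWV : ∀ (k : Γ) (z : lp (fun _ : Γ => Lp ℂ 2 μ) 2),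
            W (V k z) = V k (W z) := by
          intro k z
          have h2 := hW (V k) (hgen2 k)
          calc W (V k z) = (W * V k) z := rfl
            _ = (V k * W) z := by rw [h2]
            _ = V k (W z) := rfl
        have hexists : ∀ g h : Γ, ∃ c : ℂ, ∀ ζ : Lp ℂ 2 μ,
            (W (lp.single 2 h ζ) : ∀ _ : Γ, Lp ℂ 2 μ) g = c • ζ := by
          intro g h
          refine aux11_scalar _ fun S' ζ => ?_
          rw [← aux11_iota_single hι S' h ζ, hWι, hι]
        choose w hw using hexists
        have hwinv : ∀ (k g h : Γ) (ζ : Lp ℂ 2 μ),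
            w g (k * h) • ζ = w (k⁻¹ * g) h • ζ := by
          intro k g h ζ
          calc w g (k * h) • ζ
              = (W (lp.single 2 (k * h) ζ) : ∀ _ : Γ, Lp ℂ 2 μ) g := (hw g (k * h) ζ).symm
            _ = (W (V k (lp.single 2 h (UL k⁻¹ ζ))) : ∀ _ : Γ, Lp ℂ 2 μ) g := by
                rw [aux11_V_single hV, aux11_UL_cancel hmp hone hmulact hUL]
            _ = (V k (W (lp.single 2 h (UL k⁻¹ ζ))) : ∀ _ : Γ, Lp ℂ 2 μ) g := by
                rw [hWV]
            _ = UL k ((W (lp.single 2 h (UL k⁻¹ ζ)) : ∀ _ : Γ, Lp ℂ 2 μ) (k⁻¹ * g)) :=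
                hV k _ g
            _ = UL k (w (k⁻¹ * g) h • UL k⁻¹ ζ) := by rw [hw]
            _ = w (k⁻¹ * g) h • (UL k (UL k⁻¹ ζ)) := _root_.map_smul _ _ _
            _ = w (k⁻¹ * g) h • ζ := by rw [aux11_UL_cancel hmp hone hmulact hUL]
        have hcore : ∀ (h : Γ) (ζ : Lp ℂ 2 μ),
            W (D (lp.single 2 h ζ)) = D (W (lp.single 2 h ζ)) := by
          intro h ζ
          set ψ : lp (fun _ : Γ => Lp ℂ 2 μ) 2 := lam (T (aux11_Mc lam ζ)) with hψ
          rw [hDsingle h ζ]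
          have hψsum : HasSum (fun j : Γ => lp.single 2 j ((ψ : ∀ _ : Γ, Lp ℂ 2 μ) j)) ψ :=
            lp.hasSum_single ENNReal.ofNat_ne_top ψ
          have hL1 : HasSum
              (fun j : Γ => W (aux11_Rc Γ h⁻¹ (lp.single 2 j ((ψ : ∀ _ : Γ, Lp ℂ 2 μ) j))))
              (W (aux11_Rc Γ h⁻¹ ψ)) := (hψsum.mapL (aux11_Rc Γ h⁻¹)).mapL W
          simp only [aux11_R_single] at hL1
          apply lp.ext
          funext g'
          have hLg' := hL1.mapL (aux11_ev Γ g')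
          simp only [aux11_ev_apply, hw] at hLg'
          have hre1 : (fun j : Γ => w g' (j * h) • (ψ : ∀ _ : Γ, Lp ℂ 2 μ) j)
              = fun j : Γ => w (j⁻¹ * g') h • (ψ : ∀ _ : Γ, Lp ℂ 2 μ) j :=
            funext fun j => hwinv j g' h _
          rw [hre1] at hLg'
          -- right-hand side
          have hWs : HasSum
              (fun j : Γ => lp.single 2 j ((W (lp.single 2 h ζ) : ∀ _ : Γ, Lp ℂ 2 μ) j))
              (W (lp.single 2 h ζ)) := lp.hasSum_single ENNReal.ofNat_ne_top _
          simp only [hw] at hWs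
          have hR1 := hWs.mapL D
          have hterm : ∀ j : Γ, D (lp.single 2 j (w j h • ζ)) = w j h • aux11_Rc Γ j⁻¹ ψ := by
            intro j
            rw [lp.single_smul, _root_.map_smul, hDsingle]
          simp only [hterm] at hR1
          have hRg' := hR1.mapL (aux11_ev Γ g')
          have hev_smul : ∀ j : Γ, aux11_ev Γ g' (w j h • aux11_Rc Γ j⁻¹ ψ)
              = w j h • (ψ : ∀ _ : Γ, Lp ℂ 2 μ) (g' * j⁻¹) := by
            intro j; rw [_root_.map_smul]; rfl
          simp only [hev_smul, aux11_ev_apply] at hRg'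
          have hRg'' := (((Equiv.inv Γ).trans (Equiv.mulRight g')).hasSum_iff).mpr hRg'
          have hre2 : ((fun j : Γ => w j h • (ψ : ∀ _ : Γ, Lp ℂ 2 μ) (g' * j⁻¹)) ∘
              ((Equiv.inv Γ).trans (Equiv.mulRight g')))
              = fun j : Γ => w (j⁻¹ * g') h • (ψ : ∀ _ : Γ, Lp ℂ 2 μ) j := by
            funext j
            simp only [Function.comp_apply, Equiv.trans_apply, Equiv.inv_apply,
              Equiv.coe_mulRight]
            congr 2
            rw [mul_inv_rev, inv_inv, mul_inv_cancel_left]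
          rw [hre2] at hRg''
          exact hLg'.unique hRg''
        refine ContinuousLinearMap.ext fun z => ?_
        show W (D z) = D (W z)
        have hz : HasSum (fun h : Γ => lp.single 2 h ((z : ∀ _ : Γ, Lp ℂ 2 μ) h)) z :=
          lp.hasSum_single ENNReal.ofNat_ne_top z
        have h1 := (hz.mapL D).mapL W
        have h2 := (hz.mapL W).mapL D
        simp only [hcore] at h1
        exact h1.unique h2
      rw [N.centralizer_centralizer] at hDmem'
      refine ⟨D, hDmem', ?_⟩
      rw [hDdef]
      refine ContinuousLinearMap.ext fun η => ?_
      simp only [ContinuousLinearMap.comp_apply, hatlam]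
    · rintro x ⟨S, hS, rfl⟩
      simp only [Set.mem_setOf_eq] at hS
      have hSR : ∀ g : Γ, aux11_Rc Γ g * S = S * aux11_Rc Γ g := by
        intro g
        refine aux11_Ncomm_spec ?_ g
        exact hmin (aux11_Ncomm Γ (Lp ℂ 2 μ))
          (fun S' => aux11_mem_Ncomm fun g' => aux11_iota_Rc hι S' g')
          (fun k => aux11_mem_Ncomm fun g' => aux11_V_Rc hV k g') S hS
      refine ⟨hat ∘L S ∘L lam, ?_, ?_⟩
      · intro g η
        show hat (S (lam (UL g η))) = UL g (hat (S (lam η)))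
        have h1 : lam (UL g η) = aux11_Rc Γ g (lam η) :=
          congrArg (fun A : Lp ℂ 2 μ →L[ℂ] lp (fun _ : Γ => Lp ℂ 2 μ) 2 => A η)
            (aux11_lam_Uc hmp hmulact hUL hlam g)
        rw [h1]
        have h2 := congrArg
          (fun A : lp (fun _ : Γ => Lp ℂ 2 μ) 2 →L[ℂ] lp (fun _ : Γ => Lp ℂ 2 μ) 2 =>
            A (lam η)) (hSR g)
        simp only [ContinuousLinearMap.mul_apply] at h2
        rw [← h2]
        exact congrArg (fun A : lp (fun _ : Γ => Lp ℂ 2 μ) 2 →L[ℂ] Lp ℂ 2 μ =>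
          A (S (lam η))) (aux11_hat_Rc hmp hone hmulact hUL hlam hhat g)
      · rfl
end

section
/- Atiyah's functional τ(T) := Tr(M_χ ∘ T ∘ M_χ), defined on nonnegative Γ-invariant bounded operators T on L²(M̂), where χ is the characteristic function of a measurable fundamental domain for a free proper measure-preserving action of the countable group Γ, is independent of the choice of fundamental domain and is a tracial functional: τ(S*S) = τ(SS*) for all Γ-invariant bounded S. -/
open MeasureTheory ContinuousLinearMap
open scoped ENNReal

/-- The usual trace on `B(ℋ)` (for nonnegative operators), via an orthonormal basis. -/
noncomputable def basisTR {H : Type*} [NormedAddCommGroup H] [InnerProductSpace ℂ H]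
    [CompleteSpace H] (f : HilbertBasis ℕ ℂ H) (T : H →L[ℂ] H) : ℝ≥0∞ :=
  ∑' i : ℕ, ENNReal.ofReal ((inner ℂ (T (f i)) (f i) : ℂ).re)

/-- Parseval in `ℝ≥0∞` form. -/
lemma atiyah_aux_parseval {H : Type*} [NormedAddCommGroup H] [InnerProductSpace ℂ H]
    [CompleteSpace H] (b : HilbertBasis ℕ ℂ H) (x : H) :
    ∑' i : ℕ, ENNReal.ofReal (‖(inner ℂ (b i) x : ℂ)‖ ^ 2) = ENNReal.ofReal (‖x‖ ^ 2) := by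
  have h := b.hasSum_inner_mul_inner x x
  have h2 : HasSum (fun i : ℕ => ‖(inner ℂ (b i) x : ℂ)‖ ^ 2) (‖x‖ ^ 2) := by
    have h3 := h.mapL Complex.reCLM
    convert h3 using 2 with i
    · rw [← inner_conj_symm x (b i), RCLike.conj_mul]
      simp [← Complex.ofReal_pow]
    · simp [← inner_self_eq_norm_sq (𝕜 := ℂ) x]
  rw [← h2.tsum_eq, ENNReal.ofReal_tsum_of_nonneg (fun i => sq_nonneg _) h2.summable]

/-- `∑ ‖A fᵢ‖² = ∑ ‖A† fᵢ‖²` for a Hilbert basis `f`. -/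
lemma atiyah_aux_flip {H : Type*} [NormedAddCommGroup H] [InnerProductSpace ℂ H]
    [CompleteSpace H] (f : HilbertBasis ℕ ℂ H) (A : H →L[ℂ] H) :
    ∑' i : ℕ, ENNReal.ofReal (‖A (f i)‖ ^ 2)
      = ∑' i : ℕ, ENNReal.ofReal (‖(ContinuousLinearMap.adjoint A) (f i)‖ ^ 2) := by
  calc ∑' i : ℕ, ENNReal.ofReal (‖A (f i)‖ ^ 2)
      = ∑' i : ℕ, ∑' j : ℕ, ENNReal.ofReal (‖(inner ℂ (f j) (A (f i)) : ℂ)‖ ^ 2) := by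
        exact tsum_congr fun i => (atiyah_aux_parseval f (A (f i))).symm
    _ = ∑' j : ℕ, ∑' i : ℕ, ENNReal.ofReal (‖(inner ℂ (f j) (A (f i)) : ℂ)‖ ^ 2) :=
        ENNReal.tsum_comm
    _ = ∑' j : ℕ, ∑' i : ℕ,
          ENNReal.ofReal (‖(inner ℂ (f i) ((ContinuousLinearMap.adjoint A) (f j)) : ℂ)‖ ^ 2) := by
        refine tsum_congr fun j => tsum_congr fun i => ?_
        rw [← ContinuousLinearMap.adjoint_inner_left A (f i) (f j), norm_inner_symm]
    _ = ∑' j : ℕ, ENNReal.ofReal (‖(ContinuousLinearMap.adjoint A) (f j)‖ ^ 2) :=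
        tsum_congr fun j => atiyah_aux_parseval f _

/-- The key measure-theoretic identity: summing `‖M_χ U_g ζ‖²` over the group recovers `‖ζ‖²`. -/
lemma atiyah_key {Γ : Type*} [Group Γ] [Countable Γ]
    {M : Type*} [MeasurableSpace M] {μ : Measure M}
    (a : Γ → M → M)
    (hmp : ∀ g : Γ, MeasurePreserving (a g) μ μ)
    (hone : ∀ m : M, a 1 m = m)
    (hmulact : ∀ (g h : Γ) (m : M), a (g * h) m = a h (a g m))
    {V : Set M} (hV : MeasurableSet V)
    (hfnd : ∀ᵐ m ∂μ, ∃! g : Γ, a g m ∈ V)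
    (UL : Γ → (Lp ℂ 2 μ ≃ₗᵢ[ℂ] Lp ℂ 2 μ))
    (hUL : ∀ (g : Γ) (η : Lp ℂ 2 μ),
      ((UL g η : Lp ℂ 2 μ) : M → ℂ) =ᵐ[μ] fun m => (η : M → ℂ) (a g m))
    (Mc : Lp ℂ 2 μ →L[ℂ] Lp ℂ 2 μ)
    (hMc : ∀ η : Lp ℂ 2 μ,
      ((Mc η : Lp ℂ 2 μ) : M → ℂ) =ᵐ[μ]
        fun m => (Set.indicator V (fun _ => (1 : ℂ)) m) * (η : M → ℂ) m)
    (ζ : Lp ℂ 2 μ) :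
    ∑' g : Γ, ENNReal.ofReal (‖Mc (UL g ζ)‖ ^ 2) = ENNReal.ofReal (‖ζ‖ ^ 2) := by
  classical
  have eleft : ∀ (g : Γ) (m : M), a g⁻¹ (a g m) = m := fun g m => by
    rw [← hmulact g g⁻¹ m, mul_inv_cancel, hone]
  have eright : ∀ (g : Γ) (m : M), a g (a g⁻¹ m) = m := fun g m => by
    rw [← hmulact g⁻¹ g m, inv_mul_cancel, hone]
  let e : Γ → M ≃ᵐ M := fun g =>
    { toFun := a g, invFun := a g⁻¹, left_inv := eleft g, right_inv := eright g,
      measurable_toFun := (hmp g).measurable, measurable_invFun := (hmp g⁻¹).measurable }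
  have hnorm : ∀ η : Lp ℂ 2 μ,
      ENNReal.ofReal (‖η‖ ^ 2) = ∫⁻ m, (‖(η : M → ℂ) m‖₊ : ℝ≥0∞) ^ 2 ∂μ := by
    intro η
    have h1 : ENNReal.ofReal (‖η‖ ^ 2) = (eLpNorm η 2 μ) ^ 2 := by
      rw [Lp.norm_def, ← ENNReal.toReal_pow,
        ENNReal.ofReal_toReal (ENNReal.pow_ne_top (Lp.eLpNorm_ne_top η))]
    rw [h1, eLpNorm_eq_lintegral_rpow_enorm_toReal two_ne_zero ENNReal.ofNat_ne_top]
    simp only [ENNReal.toReal_ofNat]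
    rw [← ENNReal.rpow_natCast _ 2, ← ENNReal.rpow_mul]
    norm_num
    rfl
  have hg : ∀ g : Γ, ENNReal.ofReal (‖Mc (UL g ζ)‖ ^ 2)
      = ∫⁻ m, (Set.indicator V (fun _ => (1 : ℝ≥0∞)) (a g⁻¹ m))
          * (‖(ζ : M → ℂ) m‖₊ : ℝ≥0∞) ^ 2 ∂μ := by
    intro g
    rw [hnorm]
    have step1 : ∫⁻ m, (‖((Mc (UL g ζ) : Lp ℂ 2 μ) : M → ℂ) m‖₊ : ℝ≥0∞) ^ 2 ∂μ
        = ∫⁻ m, (Set.indicator V (fun _ => (1 : ℝ≥0∞)) m)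
            * (‖(ζ : M → ℂ) (a g m)‖₊ : ℝ≥0∞) ^ 2 ∂μ := by
      refine lintegral_congr_ae ?_
      filter_upwards [hMc (UL g ζ), hUL g ζ] with m h1 h2
      rw [h1, h2]
      by_cases hm : m ∈ V
      · simp [Set.indicator_of_mem hm]
      · simp [Set.indicator_of_notMem hm]
    rw [step1]
    have step2 := (hmp g).lintegral_comp_emb (e g).measurableEmbedding
      (fun m => (Set.indicator V (fun _ => (1 : ℝ≥0∞)) (a g⁻¹ m))
        * (‖(ζ : M → ℂ) m‖₊ : ℝ≥0∞) ^ 2)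
    rw [← step2]
    exact lintegral_congr fun m => by rw [eleft g m]
  calc ∑' g : Γ, ENNReal.ofReal (‖Mc (UL g ζ)‖ ^ 2)
      = ∑' g : Γ, ∫⁻ m, (Set.indicator V (fun _ => (1 : ℝ≥0∞)) (a g⁻¹ m))
          * (‖(ζ : M → ℂ) m‖₊ : ℝ≥0∞) ^ 2 ∂μ := tsum_congr hg
    _ = ∫⁻ m, ∑' g : Γ, (Set.indicator V (fun _ => (1 : ℝ≥0∞)) (a g⁻¹ m))
          * (‖(ζ : M → ℂ) m‖₊ : ℝ≥0∞) ^ 2 ∂μ := by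
        refine (lintegral_tsum fun g => ?_).symm
        exact (((measurable_const.indicator hV).comp (hmp g⁻¹).measurable).aemeasurable.mul
          ((Lp.aestronglyMeasurable ζ).enorm.pow_const 2))
    _ = ∫⁻ m, (∑' g : Γ, Set.indicator V (fun _ => (1 : ℝ≥0∞)) (a g⁻¹ m))
          * (‖(ζ : M → ℂ) m‖₊ : ℝ≥0∞) ^ 2 ∂μ :=
        lintegral_congr fun m => ENNReal.tsum_mul_right
    _ = ∫⁻ m, (‖(ζ : M → ℂ) m‖₊ : ℝ≥0∞) ^ 2 ∂μ := by
        refine lintegral_congr_ae ?_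
        filter_upwards [hfnd] with m hm
        obtain ⟨g₀, hg₀, huniq⟩ := hm
        have hre : ∑' g : Γ, Set.indicator V (fun _ => (1 : ℝ≥0∞)) (a g⁻¹ m)
            = ∑' g : Γ, Set.indicator V (fun _ => (1 : ℝ≥0∞)) (a g m) :=
          Equiv.tsum_eq (Equiv.inv Γ) (fun g => Set.indicator V (fun _ => (1 : ℝ≥0∞)) (a g m))
        rw [hre]
        have heq : (fun g : Γ => Set.indicator V (fun _ => (1 : ℝ≥0∞)) (a g m))
            = fun g : Γ => if g = g₀ then (1 : ℝ≥0∞) else 0 := by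
          funext g
          by_cases h : g = g₀
          · subst h; simp [Set.indicator_of_mem hg₀]
          · have : a g m ∉ V := fun hmem => h (huniq g hmem)
            simp [Set.indicator_of_notMem this, h]
        rw [heq, tsum_ite_eq g₀ (fun _ => (1 : ℝ≥0∞)), one_mul]
    _ = ENNReal.ofReal (‖ζ‖ ^ 2) := (hnorm ζ).symm

/-- Multiplication by a characteristic function is self-adjoint. -/
lemma atiyah_selfadj {M : Type*} [MeasurableSpace M] {μ : Measure M}
    (V : Set M) (Mc : Lp ℂ 2 μ →L[ℂ] Lp ℂ 2 μ)
    (hMc : ∀ η : Lp ℂ 2 μ,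
      ((Mc η : Lp ℂ 2 μ) : M → ℂ) =ᵐ[μ]
        fun m => (Set.indicator V (fun _ => (1 : ℂ)) m) * (η : M → ℂ) m) :
    ContinuousLinearMap.adjoint Mc = Mc := by
  symm
  rw [ContinuousLinearMap.eq_adjoint_iff]
  intro x y
  rw [MeasureTheory.L2.inner_def, MeasureTheory.L2.inner_def]
  refine integral_congr_ae ?_
  filter_upwards [hMc x, hMc y] with m h1 h2
  rw [RCLike.inner_apply, RCLike.inner_apply, h1, h2]
  by_cases hm : m ∈ V
  · simp [Set.indicator_of_mem hm]
  · simp [Set.indicator_of_notMem hm]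

/-- The core exchange identity. -/
lemma atiyah_core {H : Type*} [NormedAddCommGroup H] [InnerProductSpace ℂ H]
    [CompleteSpace H] {Γ : Type*} [Group Γ] [Countable Γ]
    (f : HilbertBasis ℕ ℂ H) (u : Γ → H →L[ℂ] H)
    (hadj : ∀ g : Γ, ContinuousLinearMap.adjoint (u g) = u g⁻¹)
    (Mc Mc' : H →L[ℂ] H)
    (hMcsa : ContinuousLinearMap.adjoint Mc = Mc)
    (hMc'sa : ContinuousLinearMap.adjoint Mc' = Mc')
    (keyc : ∀ ζ : H, ∑' g : Γ, ENNReal.ofReal (‖Mc (u g ζ)‖ ^ 2) = ENNReal.ofReal (‖ζ‖ ^ 2))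
    (keyc' : ∀ ζ : H, ∑' g : Γ, ENNReal.ofReal (‖Mc' (u g ζ)‖ ^ 2) = ENNReal.ofReal (‖ζ‖ ^ 2))
    (R : H →L[ℂ] H) (hR : ∀ g : Γ, R ∘L u g = u g ∘L R) :
    ∑' i : ℕ, ENNReal.ofReal (‖R (Mc (f i))‖ ^ 2)
      = ∑' i : ℕ, ENNReal.ofReal (‖(ContinuousLinearMap.adjoint R) (Mc' (f i))‖ ^ 2) := by
  have hRadj : ∀ g : Γ, (ContinuousLinearMap.adjoint R) ∘L u g⁻¹
      = u g⁻¹ ∘L (ContinuousLinearMap.adjoint R) := by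
    intro g
    have h := congrArg ContinuousLinearMap.adjoint (hR g)
    rw [ContinuousLinearMap.adjoint_comp, ContinuousLinearMap.adjoint_comp, hadj g] at h
    exact h.symm
  have hXadj : ∀ g : Γ, ∀ x : H, (ContinuousLinearMap.adjoint (Mc' ∘L (u g ∘L (R ∘L Mc)))) x
      = Mc (u g⁻¹ ((ContinuousLinearMap.adjoint R) (Mc' x))) := by
    intro g x
    rw [ContinuousLinearMap.adjoint_comp, ContinuousLinearMap.adjoint_comp,
      ContinuousLinearMap.adjoint_comp, hadj g, hMcsa, hMc'sa]
    have hcomm := ContinuousLinearMap.ext_iff.mp (hRadj g) (Mc' x)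
    simp only [ContinuousLinearMap.coe_comp', Function.comp_apply] at hcomm ⊢
    rw [hcomm]
  calc ∑' i : ℕ, ENNReal.ofReal (‖R (Mc (f i))‖ ^ 2)
      = ∑' i : ℕ, ∑' g : Γ, ENNReal.ofReal (‖Mc' (u g (R (Mc (f i))))‖ ^ 2) :=
        tsum_congr fun i => (keyc' (R (Mc (f i)))).symm
    _ = ∑' g : Γ, ∑' i : ℕ, ENNReal.ofReal (‖Mc' (u g (R (Mc (f i))))‖ ^ 2) :=
        ENNReal.tsum_comm
    _ = ∑' g : Γ, ∑' i : ℕ, ENNReal.ofReal (‖(Mc' ∘L (u g ∘L (R ∘L Mc))) (f i)‖ ^ 2) := rfl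
    _ = ∑' g : Γ, ∑' i : ℕ,
          ENNReal.ofReal (‖(ContinuousLinearMap.adjoint (Mc' ∘L (u g ∘L (R ∘L Mc)))) (f i)‖ ^ 2) :=
        tsum_congr fun g => atiyah_aux_flip f _
    _ = ∑' g : Γ, ∑' i : ℕ,
          ENNReal.ofReal (‖Mc (u g⁻¹ ((ContinuousLinearMap.adjoint R) (Mc' (f i))))‖ ^ 2) := by
        refine tsum_congr fun g => tsum_congr fun i => ?_
        rw [hXadj g (f i)]
    _ = ∑' g : Γ, ∑' i : ℕ,
          ENNReal.ofReal (‖Mc (u g ((ContinuousLinearMap.adjoint R) (Mc' (f i))))‖ ^ 2) :=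
        Equiv.tsum_eq (Equiv.inv Γ)
          (fun g => ∑' i : ℕ,
            ENNReal.ofReal (‖Mc (u g ((ContinuousLinearMap.adjoint R) (Mc' (f i))))‖ ^ 2))
    _ = ∑' i : ℕ, ∑' g : Γ,
          ENNReal.ofReal (‖Mc (u g ((ContinuousLinearMap.adjoint R) (Mc' (f i))))‖ ^ 2) :=
        ENNReal.tsum_comm
    _ = ∑' i : ℕ, ENNReal.ofReal (‖(ContinuousLinearMap.adjoint R) (Mc' (f i))‖ ^ 2) :=
        tsum_congr fun i => keyc _

/-- Bridge between `basisTR` of a sandwiched operator and the sums of squared norms. -/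
lemma atiyah_bridge {H : Type*} [NormedAddCommGroup H] [InnerProductSpace ℂ H]
    [CompleteSpace H] (f : HilbertBasis ℕ ℂ H) (Mc : H →L[ℂ] H)
    (hMcsa : ContinuousLinearMap.adjoint Mc = Mc) (C : H →L[ℂ] H) :
    basisTR f (Mc ∘L (ContinuousLinearMap.adjoint C ∘L C) ∘L Mc)
      = ∑' i : ℕ, ENNReal.ofReal (‖C (Mc (f i))‖ ^ 2) := by
  refine tsum_congr fun i => ?_
  congr 1
  have h0 : (Mc ∘L (ContinuousLinearMap.adjoint C ∘L C) ∘L Mc) (f i)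
      = Mc ((ContinuousLinearMap.adjoint C) (C (Mc (f i)))) := rfl
  rw [h0]
  have h1 : (inner ℂ (Mc ((ContinuousLinearMap.adjoint C) (C (Mc (f i))))) (f i) : ℂ)
      = inner ℂ ((ContinuousLinearMap.adjoint C) (C (Mc (f i)))) (Mc (f i)) := by
    have h := ContinuousLinearMap.adjoint_inner_left Mc (f i)
      ((ContinuousLinearMap.adjoint C) (C (Mc (f i))))
    rwa [hMcsa] at h
  have h2 : (inner ℂ ((ContinuousLinearMap.adjoint C) (C (Mc (f i)))) (Mc (f i)) : ℂ)
      = inner ℂ (C (Mc (f i))) (C (Mc (f i))) :=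
    ContinuousLinearMap.adjoint_inner_left C _ _
  rw [h1, h2]
  simp [← inner_self_eq_norm_sq (𝕜 := ℂ) (C (Mc (f i)))]

set_option maxHeartbeats 1000000 in
set_option synthInstance.maxHeartbeats 1000000 in
/-- Atiyah's functional `τ(T) = Tr(M_χ ∘ T ∘ M_χ)`, defined on
nonnegative `Γ`-invariant bounded operators on `L²(M̂)` (`χ` the characteristic function
of a measurable fundamental domain for a free measure-preserving action of the countable
group `Γ`), is independent of the choice of fundamental domain, and is tracial:
`τ(S*S) = τ(SS*)` for every `Γ`-invariant bounded `S`. -/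
theorem atiyah_trace_wellDefined_tracial {Γ : Type*} [Group Γ] [Countable Γ]
    {M : Type*} [MeasurableSpace M] (μ : Measure M) [SigmaFinite μ]
    (a : Γ → M → M)
    (hmp : ∀ g : Γ, MeasurePreserving (a g) μ μ)
    (hone : ∀ m : M, a 1 m = m)
    (hmulact : ∀ (g h : Γ) (m : M), a (g * h) m = a h (a g m))
    (hfree : ∀ g : Γ, g ≠ 1 → ∀ m, a g m ≠ m)
    -- two measurable fundamental domains
    (Uf Uf' : Set M) (hUf : MeasurableSet Uf) (hUf' : MeasurableSet Uf')
    (hfund : ∀ᵐ m ∂μ, ∃! g : Γ, a g m ∈ Uf)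
    (hfund' : ∀ᵐ m ∂μ, ∃! g : Γ, a g m ∈ Uf')
    -- the unitaries induced by the action
    (UL : Γ → (Lp ℂ 2 μ ≃ₗᵢ[ℂ] Lp ℂ 2 μ))
    (hUL : ∀ (g : Γ) (η : Lp ℂ 2 μ),
      ((UL g η : Lp ℂ 2 μ) : M → ℂ) =ᵐ[μ] fun m => (η : M → ℂ) (a g m))
    -- multiplication by the two characteristic functions
    (Mchi Mchi' : Lp ℂ 2 μ →L[ℂ] Lp ℂ 2 μ)
    (hMchi : ∀ η : Lp ℂ 2 μ,
      ((Mchi η : Lp ℂ 2 μ) : M → ℂ) =ᵐ[μ]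
        fun m => (Set.indicator Uf (fun _ => (1 : ℂ)) m) * (η : M → ℂ) m)
    (hMchi' : ∀ η : Lp ℂ 2 μ,
      ((Mchi' η : Lp ℂ 2 μ) : M → ℂ) =ᵐ[μ]
        fun m => (Set.indicator Uf' (fun _ => (1 : ℂ)) m) * (η : M → ℂ) m)
    -- an orthonormal basis of L²(M̂), computing the usual trace Tr
    (f : HilbertBasis ℕ ℂ (Lp ℂ 2 μ)) :
    (∀ T : Lp ℂ 2 μ →L[ℂ] Lp ℂ 2 μ,
        (∀ (g : Γ) (η : Lp ℂ 2 μ), T (UL g η) = UL g (T η)) →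
        T.IsPositive →
        basisTR f (Mchi ∘L T ∘L Mchi) = basisTR f (Mchi' ∘L T ∘L Mchi')) ∧
    (∀ S : Lp ℂ 2 μ →L[ℂ] Lp ℂ 2 μ,
        (∀ (g : Γ) (η : Lp ℂ 2 μ), S (UL g η) = UL g (S η)) →
        basisTR f (Mchi ∘L (ContinuousLinearMap.adjoint S ∘L S) ∘L Mchi) =
          basisTR f (Mchi ∘L (S ∘L ContinuousLinearMap.adjoint S) ∘L Mchi)) := by
  classical
  -- the unitaries as continuous linear maps
  set u : Γ → (Lp ℂ 2 μ →L[ℂ] Lp ℂ 2 μ) :=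
    fun g => ((UL g).toContinuousLinearEquiv : Lp ℂ 2 μ →L[ℂ] Lp ℂ 2 μ) with hu
  have hu_app : ∀ (g : Γ) (η : Lp ℂ 2 μ), u g η = UL g η := fun g η => rfl
  -- inverse property of `UL`
  have eright : ∀ (g : Γ) (m : M), a g (a g⁻¹ m) = m := fun g m => by
    rw [← hmulact g⁻¹ g m, inv_mul_cancel, hone]
  have hULinv : ∀ (g : Γ) (η : Lp ℂ 2 μ), UL g⁻¹ (UL g η) = η := by
    intro g η
    apply Lp.ext (p := (2 : ℝ≥0∞))
    have h1 := hUL g⁻¹ (UL g η)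
    have h2 : (fun m => ((UL g η : Lp ℂ 2 μ) : M → ℂ) (a g⁻¹ m)) =ᵐ[μ]
        fun m => (η : M → ℂ) (a g (a g⁻¹ m)) :=
      (hmp g⁻¹).quasiMeasurePreserving.ae_eq_comp (hUL g η)
    refine h1.trans (h2.trans ?_)
    filter_upwards with m
    rw [eright g m]
  have hULinv' : ∀ (g : Γ) (η : Lp ℂ 2 μ), UL g (UL g⁻¹ η) = η := by
    intro g η
    have := hULinv g⁻¹ η
    rwa [inv_inv] at this
  -- adjoints of the unitaries
  have hadj : ∀ g : Γ, ContinuousLinearMap.adjoint (u g) = u g⁻¹ := by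
    intro g
    symm
    rw [ContinuousLinearMap.eq_adjoint_iff]
    intro x y
    have : (inner ℂ x (u g y) : ℂ) = inner ℂ (UL g (UL g⁻¹ x)) (UL g y) := by
      rw [hULinv' g x]; rfl
    rw [this, (UL g).inner_map_map]
    rfl
  have huinv : ∀ g : Γ, (u g⁻¹) ∘L (u g) = ContinuousLinearMap.id ℂ (Lp ℂ 2 μ) :=
    fun g => ContinuousLinearMap.ext fun η => hULinv g η
  -- self-adjointness of the multiplication operators
  have hMsa : ContinuousLinearMap.adjoint Mchi = Mchi := atiyah_selfadj Uf Mchi hMchi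
  have hMsa' : ContinuousLinearMap.adjoint Mchi' = Mchi' := atiyah_selfadj Uf' Mchi' hMchi'
  -- the key identities
  have keyc : ∀ ζ : Lp ℂ 2 μ,
      ∑' g : Γ, ENNReal.ofReal (‖Mchi (u g ζ)‖ ^ 2) = ENNReal.ofReal (‖ζ‖ ^ 2) :=
    fun ζ => atiyah_key a hmp hone hmulact hUf hfund UL hUL Mchi hMchi ζ
  have keyc' : ∀ ζ : Lp ℂ 2 μ,
      ∑' g : Γ, ENNReal.ofReal (‖Mchi' (u g ζ)‖ ^ 2) = ENNReal.ofReal (‖ζ‖ ^ 2) :=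
    fun ζ => atiyah_key a hmp hone hmulact hUf' hfund' UL hUL Mchi' hMchi' ζ
  constructor
  · -- independence of fundamental domain
    intro T hTcomm hTpos
    have hT0 : (0 : Lp ℂ 2 μ →L[ℂ] Lp ℂ 2 μ) ≤ T :=
      (ContinuousLinearMap.nonneg_iff_isPositive T).mpr hTpos
    haveI : NonUnitalContinuousFunctionalCalculus ℝ (Lp ℂ 2 μ →L[ℂ] Lp ℂ 2 μ) IsSelfAdjoint :=
      IsSelfAdjoint.instNonUnitalContinuousFunctionalCalculus
    set R := CFC.sqrt T with hRdef
    have hR0 : (0 : Lp ℂ 2 μ →L[ℂ] Lp ℂ 2 μ) ≤ R := CFC.sqrt_nonneg T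
    have hRmul : R * R = T := CFC.sqrt_mul_sqrt_self T hT0
    have hRsa : ContinuousLinearMap.adjoint R = R := by
      rw [← ContinuousLinearMap.star_eq_adjoint]
      exact ((ContinuousLinearMap.nonneg_iff_isPositive R).mp hR0).isSelfAdjoint.star_eq
    -- T commutes with u g as CLMs
    have hTcomm' : ∀ g : Γ, T ∘L u g = u g ∘L T :=
      fun g => ContinuousLinearMap.ext fun η => hTcomm g η
    -- R commutes with u g
    have hRR : R ∘L R = T := hRmul
    have hRcomm : ∀ g : Γ, R ∘L u g = u g ∘L R := by
      intro g
      have hBpos : ((u g) ∘L R ∘L (u g⁻¹)).IsPositive := by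
        have := ((ContinuousLinearMap.nonneg_iff_isPositive R).mp hR0).conj_adjoint (u g)
        rwa [hadj g] at this
      have hB0 : (0 : Lp ℂ 2 μ →L[ℂ] Lp ℂ 2 μ) ≤ (u g) ∘L R ∘L (u g⁻¹) :=
        (ContinuousLinearMap.nonneg_iff_isPositive _).mpr hBpos
      have hBB : ((u g) ∘L R ∘L (u g⁻¹)) * ((u g) ∘L R ∘L (u g⁻¹)) = T := by
        refine ContinuousLinearMap.ext fun η => ?_
        show UL g (R (UL g⁻¹ (UL g (R (UL g⁻¹ η))))) = T η
        rw [hULinv g (R (UL g⁻¹ η)),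
          show R (R (UL g⁻¹ η)) = T (UL g⁻¹ η) from ContinuousLinearMap.ext_iff.mp hRR _,
          hTcomm g⁻¹ η]
        exact hULinv' g (T η)
      have hRB : ((u g) ∘L R ∘L (u g⁻¹)) = R := (CFC.sqrt_unique hBB hB0).symm
      refine ContinuousLinearMap.ext fun η => ?_
      have h : UL g (R (UL g⁻¹ (UL g η))) = R (UL g η) :=
        ContinuousLinearMap.ext_iff.mp hRB (UL g η)
      rw [hULinv g η] at h
      show R (UL g η) = UL g (R η)
      exact h.symm
    -- conclude
    have hTfact : T = ContinuousLinearMap.adjoint R ∘L R := by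
      rw [hRsa, ← hRmul]; rfl
    rw [hTfact, atiyah_bridge f Mchi hMsa R, atiyah_bridge f Mchi' hMsa' R]
    have := atiyah_core f u hadj Mchi Mchi' hMsa hMsa' keyc keyc' R hRcomm
    rwa [hRsa] at this
  · -- traciality
    intro S hScomm
    have hScomm' : ∀ g : Γ, S ∘L u g = u g ∘L S :=
      fun g => ContinuousLinearMap.ext fun η => hScomm g η
    have h1 := atiyah_bridge f Mchi hMsa S
    have h2 := atiyah_bridge f Mchi hMsa (ContinuousLinearMap.adjoint S)
    rw [ContinuousLinearMap.adjoint_adjoint] at h2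
    rw [h1, h2]
    exact atiyah_core f u hadj Mchi Mchi hMsa hMsa keyc keyc S hScomm'
end
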